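/- arXiv:1609.03001 — 4 statements merged into one kernel-verified Lean document; each statement's English description precedes it below -/
import Mathlib

section
/- Let n be divisible by 4, n ≥ 8, and for i ∈ {0,1} let T_i be the set of 8 entries of B_n in rows 0 and n/4 whose column index is congruent to i modulo n/4, and T_i' the set obtained by swapping the two symbols in each column of T_i. Then for each of L_1 = (B_n∖T_0)∪T_0', L_2 = (B_n∖T_1)∪T_1', L_3 = (B_n∖(T_0∪T_1))∪T_0'∪T_1', the array is a latin square of order n with no transversal. -/
open scoped Classical

/-- A latin square of order `n`: each symbol occurs exactly once in each row and column. -/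
def IsLatinSquare {n : ℕ} (L : Fin n → Fin n → Fin n) : Prop :=
  (∀ i, Function.Bijective fun j => L i j) ∧ (∀ j, Function.Bijective fun i => L i j)

/-- A `k`-plex of `L`: a set of cells with exactly `k` in each row, `k` in each column,
and each symbol occurring exactly `k` times. -/
def IsPlex {n : ℕ} (L : Fin n → Fin n → Fin n) (k : ℕ) (K : Finset (Fin n × Fin n)) : Prop :=
  (∀ i, (K.filter fun p => p.1 = i).card = k) ∧
  (∀ j, (K.filter fun p => p.2 = j).card = k) ∧
  (∀ s, (K.filter fun p => L p.1 p.2 = s).card = k)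

/-- `L` has a transversal, i.e. a `1`-plex. -/
def HasTransversal {n : ℕ} (L : Fin n → Fin n → Fin n) : Prop :=
  ∃ K, IsPlex L 1 K

/-- The square obtained from `Bₙ` by swapping, in every column whose index is
congruent to an element of `S` modulo `n/4`, the symbols in rows `0` and `n/4`. -/
def tradeSquare (n : ℕ) [NeZero n] (S : Set ℕ) [DecidablePred (· ∈ S)] :
    Fin n → Fin n → Fin n := fun r c =>
  if ((r : ℕ) = 0 ∨ (r : ℕ) = n / 4) ∧ (c : ℕ) % (n / 4) ∈ S then
    (if (r : ℕ) = 0 then (Fin.ofNat n (n / 4 : ℕ)) + c else c)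
  else r + c

section Aux
variable {n : ℕ} [NeZero n]

lemma aux_wval (h : n / 4 < n) : ((Fin.ofNat n (n / 4 : ℕ)) : ℕ) = n / 4 := by
  rw [Fin.val_ofNat]; exact Nat.mod_eq_of_lt h

lemma aux_mixed0 (S : Set ℕ) [DecidablePred (· ∈ S)] (h4 : 4 ∣ n)
    (i j1 j2 : Fin n) (hi0 : (i : ℕ) = 0)
    (h1 : (j1 : ℕ) % (n / 4) ∈ S) (h2 : (j2 : ℕ) % (n / 4) ∉ S)
    (h : (Fin.ofNat n (n / 4 : ℕ)) + j1 = i + j2) : False := by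
  have hn : 0 < n := Nat.pos_of_ne_zero (NeZero.ne n)
  have hqn : n / 4 < n := Nat.div_lt_self hn (by norm_num)
  have hqd : n / 4 ∣ n := Nat.div_dvd_of_dvd h4
  apply h2
  have hi' : i = 0 := by apply Fin.ext; simpa using hi0
  rw [hi', zero_add] at h
  have hval : (j2 : ℕ) = (n / 4 + (j1 : ℕ)) % n := by
    rw [← h, Fin.val_add, aux_wval hqn]
  rw [hval, Nat.mod_mod_of_dvd _ hqd, Nat.add_mod_left]
  exact h1

lemma aux_mixedq (S : Set ℕ) [DecidablePred (· ∈ S)] (h4 : 4 ∣ n)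
    (i j1 j2 : Fin n) (hiq : (i : ℕ) = n / 4)
    (h1 : (j1 : ℕ) % (n / 4) ∈ S) (h2 : (j2 : ℕ) % (n / 4) ∉ S)
    (h : j1 = i + j2) : False := by
  have hqd : n / 4 ∣ n := Nat.div_dvd_of_dvd h4
  apply h2
  have hval : (j1 : ℕ) = (n / 4 + (j2 : ℕ)) % n := by rw [h, Fin.val_add, hiq]
  rw [hval, Nat.mod_mod_of_dvd _ hqd, Nat.add_mod_left] at h1
  exact h1

lemma aux_latin (S : Set ℕ) [DecidablePred (· ∈ S)] (h4 : 4 ∣ n) (h8 : 8 ≤ n) :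
    IsLatinSquare (tradeSquare n S) := by
  have hn : 0 < n := Nat.pos_of_ne_zero (NeZero.ne n)
  have hq0 : 0 < n / 4 := by omega
  have hqn : n / 4 < n := Nat.div_lt_self hn (by norm_num)
  have hwv : ((Fin.ofNat n (n / 4 : ℕ)) : ℕ) = n / 4 := aux_wval hqn
  constructor
  · intro i
    rw [← Finite.injective_iff_bijective]
    intro j1 j2 h
    simp only [tradeSquare] at h
    split_ifs at h
    · exact add_left_cancel h
    · rename_i a b c
      exact (aux_mixed0 S h4 i j1 j2 b a.2 (fun hs => c ⟨a.1, hs⟩) h).elim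
    · exact h
    · rename_i a b c
      exact (aux_mixedq S h4 i j1 j2 (by rcases a.1 with h'|h' <;> omega) a.2
        (fun hs => c ⟨a.1, hs⟩) h).elim
    · rename_i a b c
      exact (aux_mixed0 S h4 i j2 j1 c b.2 (fun hs => a ⟨b.1, hs⟩) h.symm).elim
    · rename_i a b c
      exact (aux_mixedq S h4 i j2 j1 (by rcases b.1 with h'|h' <;> omega) b.2
        (fun hs => a ⟨b.1, hs⟩) h.symm).elim
    · exact add_left_cancel h
  · intro j
    rw [← Finite.injective_iff_bijective]
    intro r1 r2 h
    simp only [tradeSquare] at h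
    split_ifs at h
    · rename_i a b c d
      apply Fin.ext; omega
    · rename_i a b c d
      exfalso
      have h0 : (Fin.ofNat n (n / 4 : ℕ)) = 0 :=
        add_right_cancel (h.trans (zero_add j).symm)
      have := congrArg Fin.val h0
      rw [hwv, Fin.val_zero] at this; omega
    · rename_i a b c d
      exact absurd ⟨Or.inr ((congrArg Fin.val (add_right_cancel h)).symm.trans hwv), b.2⟩ d
    · rename_i a b c d
      exfalso
      have h0 : (Fin.ofNat n (n / 4 : ℕ)) = 0 :=
        add_right_cancel (h.symm.trans (zero_add j).symm)
      have := congrArg Fin.val h0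
      rw [hwv, Fin.val_zero] at this; omega
    · rename_i a b c d
      apply Fin.ext
      rcases a.1 with h'|h' <;> rcases c.1 with h''|h'' <;> omega
    · rename_i a b c d
      exfalso
      have h0 : (0 : Fin n) = r2 := add_right_cancel ((zero_add j).trans h)
      exact d ⟨Or.inl (by rw [← h0, Fin.val_zero]), b.2⟩
    · rename_i a b c d
      exfalso
      have h0 : r1 = (Fin.ofNat n (n / 4 : ℕ)) := add_right_cancel h
      exact b ⟨Or.inr (by rw [h0, hwv]), c.2⟩
    · rename_i a b c d
      exfalso
      have h0 : r1 = (0 : Fin n) := add_right_cancel (h.trans (zero_add j).symm)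
      exact b ⟨Or.inl (by rw [h0, Fin.val_zero]), c.2⟩
    · exact add_right_cancel h
end Aux

section Aux2
variable {n : ℕ} [NeZero n]

lemma aux_wval' (h : n / 4 < n) : ((Fin.ofNat n (n / 4 : ℕ)) : ℕ) = n / 4 := by
  rw [Fin.val_ofNat]; exact Nat.mod_eq_of_lt h

private def vz (x : Fin n) : ZMod n := ((x : ℕ) : ZMod n)

private lemma vz_add (a b : Fin n) : vz (a + b) = vz a + vz b := by
  unfold vz; rw [Fin.val_add, ZMod.natCast_mod, Nat.cast_add]

private lemma fib_sum (K : Finset (Fin n × Fin n)) (e : Fin n × Fin n → Fin n)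
    (he : ∀ s, (K.filter fun p => e p = s).card = 1) :
    ∑ p ∈ K, vz (e p) = ∑ x : Fin n, vz x := by
  rw [← Finset.sum_fiberwise_of_maps_to (t := Finset.univ)
    (fun p _ => Finset.mem_univ (e p)) (fun p => vz (e p))]
  refine Finset.sum_congr rfl fun s _ => ?_
  obtain ⟨p0, hp0⟩ := Finset.card_eq_one.mp (he s)
  have hmem : p0 ∈ K.filter fun p => e p = s := hp0 ▸ Finset.mem_singleton_self p0
  rw [hp0, Finset.sum_singleton, (Finset.mem_filter.mp hmem).2]

lemma aux_notrans (S : Set ℕ) [DecidablePred (· ∈ S)] (h4 : 4 ∣ n) (h8 : 8 ≤ n) :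
    ¬ HasTransversal (tradeSquare n S) := by
  rintro ⟨K, hrow, hcol, hsym⟩
  have hn : 0 < n := Nat.pos_of_ne_zero (NeZero.ne n)
  set q := n / 4 with hqdef
  have hq2 : 2 ≤ q := by
    rw [hqdef]; omega
  have hn4 : n = 4 * q := by rw [hqdef]; omega
  have hqn : q < n := by omega
  set L := tradeSquare n S with hL
  set w : Fin n := (Fin.ofNat n (q : ℕ)) with hw
  have hwv : (w : ℕ) = q := aux_wval' hqn
  -- the three total sums
  have hS : ∑ p ∈ K, vz (L p.1 p.2) = ∑ x : Fin n, vz x := fib_sum K _ hsym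
  have hR : ∑ p ∈ K, vz p.1 = ∑ x : Fin n, vz x := fib_sum K Prod.fst hrow
  have hC : ∑ p ∈ K, vz p.2 = ∑ x : Fin n, vz x := fib_sum K Prod.snd hcol
  set δ : Fin n × Fin n → ZMod n := fun p => vz (L p.1 p.2) - vz p.1 - vz p.2 with hδ
  have hδsum : ∑ p ∈ K, δ p = -(∑ x : Fin n, vz x) := by
    simp only [hδ, Finset.sum_sub_distrib, hS, hR, hC]; ring
  -- total sum value
  have hT : ∑ x : Fin n, vz x = -(((2 * q : ℕ) : ZMod n)) := by
    have e1 : ∑ x : Fin n, vz x = ((∑ i ∈ Finset.range n, i : ℕ) : ZMod n) := by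
      rw [Nat.cast_sum]
      exact Fin.sum_univ_eq_sum_range (fun i => ((i : ℕ) : ZMod n)) n
    have e2 : ∑ i ∈ Finset.range n, i = 2 * q * (4 * q - 1) := by
      rw [Finset.sum_range_id, hn4]
      rw [show 4 * q * (4 * q - 1) = 2 * (2 * q * (4 * q - 1)) by ring]
      exact Nat.mul_div_cancel_left _ (by norm_num)
    rw [e1, e2, Nat.cast_mul, Nat.cast_sub (by omega : 1 ≤ 4 * q)]
    have h0 : ((4 * q : ℕ) : ZMod n) = 0 := by
      rw [← hn4]; exact ZMod.natCast_self n
    rw [h0]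
    push_cast
    ring
  -- zero off the two special rows
  have hδzero : ∀ p ∈ K, p.1 ≠ 0 → p.1 ≠ w → δ p = 0 := by
    intro p _ h1 h2
    have hv1 : (p.1 : ℕ) ≠ 0 := fun hc => h1 (Fin.ext (by simpa using hc))
    have hv2 : (p.1 : ℕ) ≠ q := fun hc => h2 (Fin.ext (by rw [hc, hwv]))
    have : L p.1 p.2 = p.1 + p.2 := by
      rw [hL]; unfold tradeSquare
      rw [if_neg (fun hc => by rcases hc.1 with h' | h' <;> [exact hv1 h'; exact hv2 h'])]
    simp only [hδ]; rw [this, vz_add]; ring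
  have h0w : (0 : Fin n) ≠ w := by
    intro hc
    have := congrArg Fin.val hc
    rw [Fin.val_zero, hwv] at this; omega
  -- split the delta sum
  obtain ⟨p0, hp0⟩ := Finset.card_eq_one.mp (hrow 0)
  obtain ⟨p1, hp1⟩ := Finset.card_eq_one.mp (hrow w)
  have hp0m : p0 ∈ K ∧ p0.1 = 0 := by
    have := hp0 ▸ Finset.mem_singleton_self p0
    exact ⟨(Finset.mem_filter.mp this).1, (Finset.mem_filter.mp this).2⟩
  have hp1m : p1 ∈ K ∧ p1.1 = w := by
    have := hp1 ▸ Finset.mem_singleton_self p1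
    exact ⟨(Finset.mem_filter.mp this).1, (Finset.mem_filter.mp this).2⟩
  have hsplit : ∑ p ∈ K, δ p = δ p0 + δ p1 := by
    rw [← Finset.sum_filter_of_ne (p := fun p => p.1 = 0 ∨ p.1 = w)
      (by intro p hp hne; by_contra hc; push_neg at hc
          exact hne (hδzero p hp hc.1 hc.2))]
    rw [Finset.filter_or, Finset.sum_union (by
      rw [Finset.disjoint_left]
      intro p hpa hpb
      have h1 := (Finset.mem_filter.mp hpa).2
      have h2 := (Finset.mem_filter.mp hpb).2
      exact h0w (h1 ▸ h2))]
    rw [hp0, hp1, Finset.sum_singleton, Finset.sum_singleton]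
  -- values of δ p0 and δ p1
  have hvz0 : vz (0 : Fin n) = 0 := by unfold vz; rw [Fin.val_zero, Nat.cast_zero]
  have hvzw : vz w = ((q : ℕ) : ZMod n) := by unfold vz; rw [hwv]
  have hδ0 : δ p0 = 0 ∨ δ p0 = ((q : ℕ) : ZMod n) := by
    have hval : (p0.1 : ℕ) = 0 := by rw [hp0m.2, Fin.val_zero]
    by_cases hc : (p0.2 : ℕ) % q ∈ S
    · right
      have : L p0.1 p0.2 = w + p0.2 := by
        rw [hL]; unfold tradeSquare
        rw [if_pos ⟨Or.inl hval, hc⟩, if_pos hval]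
      simp only [hδ]; rw [this, vz_add, hp0m.2, hvz0, hvzw]; ring
    · left
      have : L p0.1 p0.2 = p0.1 + p0.2 := by
        rw [hL]; unfold tradeSquare
        rw [if_neg (fun hcc => hc hcc.2)]
      simp only [hδ]; rw [this, vz_add]; ring
  have hδ1 : δ p1 = 0 ∨ δ p1 = -((q : ℕ) : ZMod n) := by
    have hval : (p1.1 : ℕ) = q := by rw [hp1m.2, hwv]
    have hval0 : ¬ (p1.1 : ℕ) = 0 := by omega
    by_cases hc : (p1.2 : ℕ) % q ∈ S
    · right
      have : L p1.1 p1.2 = p1.2 := by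
        rw [hL]; unfold tradeSquare
        rw [if_pos ⟨Or.inr hval, hc⟩, if_neg hval0]
      simp only [hδ]; rw [this, hp1m.2, hvzw]; ring
    · left
      have : L p1.1 p1.2 = p1.1 + p1.2 := by
        rw [hL]; unfold tradeSquare
        rw [if_neg (fun hcc => hc hcc.2)]
      simp only [hδ]; rw [this, vz_add]; ring
  -- final contradiction
  have key : δ p0 + δ p1 = ((2 * q : ℕ) : ZMod n) := by
    rw [← hsplit, hδsum, hT]; ring
  have base : ∀ m : ℕ, 0 < m → m < n → (((m : ℕ) : ZMod n) = 0) → False := by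
    intro m hm1 hm2 hz
    have := (ZMod.natCast_eq_zero_iff m n).mp hz
    have := Nat.le_of_dvd hm1 this
    omega
  rcases hδ0 with h0 | h0 <;> rcases hδ1 with h1 | h1 <;> rw [h0, h1] at key
  · exact base (2 * q) (by omega) (by omega) (by linear_combination -key)
  · exact base (3 * q) (by omega) (by omega) (by push_cast; push_cast at key; linear_combination -key)
  · exact base q (by omega) (by omega) (by push_cast; push_cast at key; linear_combination -key)
  · exact base (2 * q) (by omega) (by omega) (by push_cast; push_cast at key; linear_combination -key)
end Aux2

theorem stmt16 (n : ℕ) [NeZero n] (h4 : 4 ∣ n) (h8 : 8 ≤ n) :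
    (IsLatinSquare (tradeSquare n {0}) ∧ ¬ HasTransversal (tradeSquare n {0})) ∧
    (IsLatinSquare (tradeSquare n {1}) ∧ ¬ HasTransversal (tradeSquare n {1})) ∧
    (IsLatinSquare (tradeSquare n {0, 1}) ∧
      ¬ HasTransversal (tradeSquare n {0, 1})) := by
  exact ⟨⟨aux_latin _ h4 h8, aux_notrans _ h4 h8⟩,
    ⟨aux_latin _ h4 h8, aux_notrans _ h4 h8⟩,
    aux_latin _ h4 h8, aux_notrans _ h4 h8⟩
end

section
/- Let n ≥ 8 be divisible by 4. Then there exists a latin square of order n containing a triplex (3-plex) but no transversal. -/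
open scoped Classical

namespace ST17
open Finset

/-- displacement of the band rows -/
def DF (a i b : ℕ) : ℕ :=
  if i < a then 2*i + 2*b else if i = a then (if b = 0 then 2*a else 0) else 2*(i-a) - 1

/-- displacement of row `i` at column `j` -/
def wF (a i j : ℕ) : ℕ := if i < 2*a+1 then DF a i (j % 2) else i

/-- the latin square, ℕ-valued -/
def lf (n a i j : ℕ) : ℕ := (j + wF a i j) % n

/-- band column offsets for the three permutations -/
def uF (a h m i : ℕ) : ℕ :=
  if m = 0 then (if i < a then 2*i+1 else if i = a then 0 else 2*(i-a))
  else if m = 1 then (if i < h then 2*i+1 else if i < a then 2*i+2 else if i = a then 0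
       else if i - a ≤ h then 2*(i-a) else 2*(i-a)-1)
  else (if i < a then 2*i else if i = a then 2*a else 2*(i-a)-1)

def cF (a m : ℕ) : ℕ := if m = 0 then 1 else if m = 1 then 4*a+1 else 0

def pF (a h m i : ℕ) : ℕ := if i < 2*a+1 then uF a h m i else i

/-- the three disjoint permutations (column of permutation `m` in row `i`) -/
def sF (n a h m i : ℕ) : ℕ := (pF a h m i + cF a m) % n

section helpers
variable {n : ℕ}

lemma mod_eq_iff3 (hv : 0 < n) {x v : ℕ} (hx : x < 3*n) (hvn : v < n) :
    x % n = v ↔ x = v ∨ x = v + n ∨ x = v + 2*n := by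
  constructor
  · intro hmod
    have h1 : x % n + n * (x / n) = x := Nat.mod_add_div x n
    have h2 : x / n < 3 := by
      by_contra hc
      push_neg at hc
      have := Nat.mul_le_mul_left n hc
      have h3 := Nat.div_mul_le_self x n
      omega
    interval_cases h : x / n <;> omega
  · rintro (rfl | rfl | rfl)
    · exact Nat.mod_eq_of_lt hvn
    · rw [Nat.add_mod_right]; exact Nat.mod_eq_of_lt hvn
    · have : v + 2*n = (v + n) + n := by ring
      rw [this, Nat.add_mod_right, Nat.add_mod_right]; exact Nat.mod_eq_of_lt hvn

lemma mod_eq_iff2 (hv : 0 < n) {x v : ℕ} (hx : x < 2*n) (hvn : v < n) :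
    x % n = v ↔ x = v ∨ x = v + n := by
  rw [mod_eq_iff3 hv (by omega) hvn]; omega

lemma mod_eq_mod2 (hv : 0 < n) {x y : ℕ} (hx : x < 2*n) (hy : y < 2*n) :
    x % n = y % n ↔ (x = y ∨ x = y + n ∨ y = x + n) := by
  have hxm := Nat.mod_add_div x n
  have hym := Nat.mod_add_div y n
  have hx2 : x / n < 2 := by
    by_contra hc; push_neg at hc
    have := Nat.mul_le_mul_left n hc
    have := Nat.div_mul_le_self x n
    omega
  have hy2 : y / n < 2 := by
    by_contra hc; push_neg at hc
    have := Nat.mul_le_mul_left n hc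
    have := Nat.div_mul_le_self y n
    omega
  have hxlt : x % n < n := Nat.mod_lt _ hv
  have hylt : y % n < n := Nat.mod_lt _ hv
  interval_cases hq : x / n <;> interval_cases hq' : y / n <;> omega

lemma mod2_of_even (h2 : 2 ∣ n) (x : ℕ) : x % n % 2 = x % 2 :=
  Nat.mod_mod_of_dvd x h2

end helpers

section pars
variable (n a h : ℕ)

lemma DF_le {a i b : ℕ} (hb : b ≤ 1) (hi : i < 2*a+1) : DF a i b ≤ 2*a := by
  unfold DF; split_ifs <;> omega

lemma wF_lt {n a : ℕ} (hn : 2*a < n) {i : ℕ} (hi : i < n) (j : ℕ) : wF a i j < n := by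
  unfold wF
  split_ifs with h1
  · have := DF_le (a := a) (i := i) (b := j % 2) (by omega) h1; omega
  · exact hi

lemma wF_parity (a i j j' : ℕ) : wF a i j % 2 = wF a i j' % 2 := by
  unfold wF DF; split_ifs <;> omega

lemma wF_mod_arg {n a : ℕ} (h2 : 2 ∣ n) (i y : ℕ) : wF a i (y % n) = wF a i y := by
  unfold wF; rw [mod2_of_even h2]

lemma uF_le {a h m i : ℕ} (hha : h ≤ a) (hi : i < 2*a+1) : uF a h m i ≤ 2*a := by
  unfold uF; split_ifs <;> omega

lemma uF_inj {a h m : ℕ} (hha : h ≤ a) {i i' : ℕ} (hi : i < 2*a+1) (hi' : i' < 2*a+1)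
    (he : uF a h m i = uF a h m i') : i = i' := by
  unfold uF at he; split_ifs at he <;> omega

lemma pF_lt {n a h m : ℕ} (hha : h ≤ a) (hn : 2*a < n) {i : ℕ} (hi : i < n) :
    pF a h m i < n := by
  unfold pF; split_ifs with h1
  · have := uF_le (m := m) hha h1; omega
  · exact hi

lemma pF_inj {a h m : ℕ} (hha : h ≤ a) {i i' : ℕ}
    (he : pF a h m i = pF a h m i') : i = i' := by
  unfold pF at he
  split_ifs at he with h1 h2 h2
  · exact uF_inj hha h1 h2 he
  · have := uF_le (m := m) (h := h) hha h1; omega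
  · have := uF_le (m := m) (h := h) hha h2; omega
  · exact he

/-- `sF` is injective in `i` (each of the three maps is a permutation). -/
lemma sF_inj {n a h m : ℕ} (hha : h ≤ a) (hn : 2*a < n) {i i' : ℕ} (hi : i < n) (hi' : i' < n)
    (he : sF n a h m i = sF n a h m i') : i = i' := by
  unfold sF at he
  have h1 : pF a h m i % n = pF a h m i' % n :=
    Nat.ModEq.add_right_cancel' (cF a m) he
  have h2 := pF_lt (m := m) hha hn hi
  have h3 := pF_lt (m := m) hha hn hi'
  rw [Nat.mod_eq_of_lt h2, Nat.mod_eq_of_lt h3] at h1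
  exact pF_inj hha h1

/-- the three permutations are pointwise distinct -/
lemma sF_ne {n a h : ℕ} (hn : n = 4*(a+h)) (h1 : 1 ≤ h) (hha : h ≤ a)
    {m m' i : ℕ} (hm : m < 3) (hm' : m' < 3) (hmm : m ≠ m') (hi : i < n) :
    sF n a h m i ≠ sF n a h m' i := by
  have hn0 : 0 < n := by omega
  intro he
  unfold sF at he
  by_cases hband : i < 2*a+1
  · -- band rows
    have hu : ∀ m'', uF a h m'' i ≤ 2*a := fun m'' => uF_le hha hband
    rw [pF, if_pos hband, pF, if_pos hband] at he
    have hx : ∀ m'', uF a h m'' i + cF a m'' < 2*n := by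
      intro m''; have := hu m''; unfold cF; split_ifs <;> omega
    -- turn both sides into linear form
    rw [mod_eq_mod2 hn0 (hx m) (hx m')] at he
    have e0 := hu 0; have e1 := hu 1; have e2 := hu 2
    interval_cases m <;> interval_cases m' <;>
      simp only [uF, cF, if_pos, if_neg] at he e0 e1 e2 <;> norm_num at he e0 e1 e2 hmm <;>
      split_ifs at he e0 e1 e2 <;> omega
  · -- cyclic rows
    rw [pF, if_neg hband, pF, if_neg hband] at he
    have h1' : cF a m % n = cF a m' % n := Nat.ModEq.add_left_cancel' i he
    have hc : ∀ m'', cF a m'' < n := by intro m''; unfold cF; split_ifs <;> omega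
    rw [Nat.mod_eq_of_lt (hc m), Nat.mod_eq_of_lt (hc m')] at h1'
    unfold cF at h1'
    interval_cases m <;> interval_cases m' <;> simp_all <;> omega

/-- row maps of L are injective -/
lemma lf_row_inj {n a : ℕ} (h2 : 2 ∣ n) (hn : 2*a < n) {i j j' : ℕ}
    (hj : j < n) (hj' : j' < n) (he : lf n a i j = lf n a i j') : j = j' := by
  have hn0 : 0 < n := by omega
  unfold lf at he
  -- parities
  have hp : (j + wF a i j) % 2 = (j' + wF a i j') % 2 := by
    have t1 := mod2_of_even h2 (j + wF a i j)
    have t2 := mod2_of_even h2 (j' + wF a i j')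
    rw [he] at t1; omega
  have hw := wF_parity a i j j'
  have hjj : j % 2 = j' % 2 := by omega
  have hww : wF a i j = wF a i j' := by unfold wF; rw [hjj]
  rw [hww] at he
  have h2' := Nat.ModEq.add_right_cancel' (wF a i j') he
  unfold Nat.ModEq at h2'
  rwa [Nat.mod_eq_of_lt hj, Nat.mod_eq_of_lt hj'] at h2' 

/-- column maps of L are injective -/
lemma lf_col_inj {n a : ℕ} (hn : 2*a < n) {j i i' : ℕ}
    (hi : i < n) (hi' : i' < n) (he : lf n a i j = lf n a i' j) : i = i' := by
  have hn0 : 0 < n := by omega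
  unfold lf at he
  have h1 : wF a i j % n = wF a i' j % n := Nat.ModEq.add_left_cancel' j he
  rw [Nat.mod_eq_of_lt (wF_lt hn hi j), Nat.mod_eq_of_lt (wF_lt hn hi' j)] at h1
  have hb : j % 2 < 2 := Nat.mod_lt _ (by norm_num)
  unfold wF DF at h1
  split_ifs at h1 <;> omega

/-- symbol of the cell of permutation `m` in row `i` -/
def tauF (n a h m i : ℕ) : ℕ := lf n a i (sF n a h m i)

lemma tau_rw {n a h : ℕ} (h2 : 2 ∣ n) (m i : ℕ) :
    tauF n a h m i = (pF a h m i + cF a m + wF a i (pF a h m i + cF a m)) % n := by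
  unfold tauF lf sF
  rw [wF_mod_arg h2]
  exact Nat.ModEq.add_right _ (Nat.mod_modEq _ n)

lemma tau_cyclic {n a h : ℕ} (h2 : 2 ∣ n) {m i : ℕ} (hi : 2*a+1 ≤ i) :
    tauF n a h m i = (i + cF a m + i) % n := by
  rw [tau_rw h2]
  unfold pF wF
  rw [if_neg (by omega), if_neg (by omega)]

lemma tau_band {n a h : ℕ} (h2 : 2 ∣ n) {m i : ℕ} (hi : i < 2*a+1) :
    tauF n a h m i = (uF a h m i + cF a m + DF a i ((uF a h m i + cF a m) % 2)) % n := by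
  rw [tau_rw h2]
  unfold pF wF
  rw [if_pos hi, if_pos hi]

section wit
variable {n a h : ℕ}

lemma band_arg_lt (hn : n = 4*(a+h)) (h1 : 1 ≤ h) (hha : h ≤ a) (m : ℕ) {i : ℕ} (hi : i < 2*a+1) :
    uF a h m i + cF a m + DF a i ((uF a h m i + cF a m) % 2) < 3*n := by
  have h1 := uF_le (m := m) hha hi
  have h2 : DF a i ((uF a h m i + cF a m) % 2) ≤ 2*a := DF_le (by omega) hi
  have h3 : cF a m ≤ 4*a+1 := by unfold cF; split_ifs <;> omega
  omega

lemma cyc_arg_lt (hn : n = 4*(a+h)) (h1 : 1 ≤ h) (m : ℕ) {i : ℕ} (hi : i < n) :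
    i + cF a m + i < 3*n := by
  have h3 : cF a m ≤ 4*a+1 := by unfold cF; split_ifs <;> omega
  omega

set_option maxHeartbeats 3200000 in
/-- three distinct rows carrying symbol `v` -/
lemma sym_witness (hn : n = 4*(a+h)) (h1 : 1 ≤ h) (hha : h ≤ a) {v : ℕ} (hv : v < n) :
    ∃ m1 i1 m2 i2 m3 i3 : ℕ, m1 < 3 ∧ m2 < 3 ∧ m3 < 3 ∧ i1 < n ∧ i2 < n ∧ i3 < n ∧
      i1 ≠ i2 ∧ i1 ≠ i3 ∧ i2 ≠ i3 ∧
      tauF n a h m1 i1 = v ∧ tauF n a h m2 i2 = v ∧ tauF n a h m3 i3 = v := by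
  have hn0 : 0 < n := by omega
  have h2 : 2 ∣ n := ⟨2*(a+h), by omega⟩
  have hDle : ∀ i b, b ≤ 1 → i < 2*a+1 → DF a i b ≤ 2*a := fun i b hb hi => DF_le hb hi
  have hule : ∀ m i, i < 2*a+1 → uF a h m i ≤ 2*a := fun m i hi => uF_le hha hi
  by_cases hpar : v % 2 = 0
  · by_cases hv0 : v = 0
    · refine ⟨1, a+h, 2, 0, 2, 2*(a+h), by norm_num, by norm_num, by norm_num,
        by omega, by omega, by omega, by omega, by omega, by omega, ?_, ?_, ?_⟩
      · rw [tau_band h2 (by omega), mod_eq_iff3 hn0 (band_arg_lt hn h1 hha 1 (by omega)) hv]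
        simp only [uF, cF, DF]; norm_num; split_ifs <;> omega
      · rw [tau_band h2 (by omega), mod_eq_iff3 hn0 (band_arg_lt hn h1 hha 2 (by omega)) hv]
        simp only [uF, cF, DF]; norm_num; split_ifs <;> omega
      · rw [tau_cyclic h2 (by omega), mod_eq_iff3 hn0 (cyc_arg_lt hn h1 2 (by omega)) hv]
        simp only [cF]; norm_num; omega
    · -- v even, nonzero
      by_cases hsm : v ≤ 4*a
      · by_cases h4 : v % 4 = 2
        · -- E1
          refine ⟨0, (v-2)/4, 2, a+(v+2)/4, 2, v/2+2*(a+h), by norm_num, by norm_num, by norm_num,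
              by omega, by omega, by omega, by omega, by omega, by omega, ?_, ?_, ?_⟩
          · rw [tau_band h2 (by omega), mod_eq_iff3 hn0 (band_arg_lt hn h1 hha 0 (by omega)) hv]
            simp only [uF, cF, DF]; norm_num
            first | (split_ifs <;> omega) | omega
          · rw [tau_band h2 (by omega), mod_eq_iff3 hn0 (band_arg_lt hn h1 hha 2 (by omega)) hv]
            simp only [uF, cF, DF]; norm_num
            first | (split_ifs <;> omega) | omega
          · rw [tau_cyclic h2 (by omega), mod_eq_iff3 hn0 (cyc_arg_lt hn h1 2 (by omega)) hv]
            simp only [cF]; norm_num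
            first | (split_ifs <;> omega) | omega
        · -- E2
          refine ⟨0, a+v/4, 2, v/4, 2, v/2+2*(a+h), by norm_num, by norm_num, by norm_num,
              by omega, by omega, by omega, by omega, by omega, by omega, ?_, ?_, ?_⟩
          · rw [tau_band h2 (by omega), mod_eq_iff3 hn0 (band_arg_lt hn h1 hha 0 (by omega)) hv]
            simp only [uF, cF, DF]; norm_num
            first | (split_ifs <;> omega) | omega
          · rw [tau_band h2 (by omega), mod_eq_iff3 hn0 (band_arg_lt hn h1 hha 2 (by omega)) hv]
            simp only [uF, cF, DF]; norm_num
            first | (split_ifs <;> omega) | omega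
          · rw [tau_cyclic h2 (by omega), mod_eq_iff3 hn0 (cyc_arg_lt hn h1 2 (by omega)) hv]
            simp only [cF]; norm_num
            first | (split_ifs <;> omega) | omega
      · by_cases h4 : v % 4 = 2
        · -- E4
          refine ⟨1, (v-4*a-2)/4, 2, v/2, 2, v/2+2*(a+h), by norm_num, by norm_num, by norm_num,
              by omega, by omega, by omega, by omega, by omega, by omega, ?_, ?_, ?_⟩
          · rw [tau_band h2 (by omega), mod_eq_iff3 hn0 (band_arg_lt hn h1 hha 1 (by omega)) hv]
            simp only [uF, cF, DF]; norm_num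
            first | (split_ifs <;> omega) | omega
          · rw [tau_cyclic h2 (by omega), mod_eq_iff3 hn0 (cyc_arg_lt hn h1 2 (by omega)) hv]
            simp only [cF]; norm_num
            first | (split_ifs <;> omega) | omega
          · rw [tau_cyclic h2 (by omega), mod_eq_iff3 hn0 (cyc_arg_lt hn h1 2 (by omega)) hv]
            simp only [cF]; norm_num
            first | (split_ifs <;> omega) | omega
        · -- E5
          refine ⟨1, a+(v-4*a)/4, 2, v/2, 2, v/2+2*(a+h), by norm_num, by norm_num, by norm_num,
              by omega, by omega, by omega, by omega, by omega, by omega, ?_, ?_, ?_⟩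
          · rw [tau_band h2 (by omega), mod_eq_iff3 hn0 (band_arg_lt hn h1 hha 1 (by omega)) hv]
            simp only [uF, cF, DF]; norm_num
            first | (split_ifs <;> omega) | omega
          · rw [tau_cyclic h2 (by omega), mod_eq_iff3 hn0 (cyc_arg_lt hn h1 2 (by omega)) hv]
            simp only [cF]; norm_num
            first | (split_ifs <;> omega) | omega
          · rw [tau_cyclic h2 (by omega), mod_eq_iff3 hn0 (cyc_arg_lt hn h1 2 (by omega)) hv]
            simp only [cF]; norm_num
            first | (split_ifs <;> omega) | omega
  · -- v odd
    by_cases hv1 : v = 1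
    · -- O1
      refine ⟨0, a, 0, 2*(a+h), 1, 2*h+2*(a+h), by norm_num, by norm_num, by norm_num,
          by omega, by omega, by omega, by omega, by omega, by omega, ?_, ?_, ?_⟩
      · rw [tau_band h2 (by omega), mod_eq_iff3 hn0 (band_arg_lt hn h1 hha 0 (by omega)) hv]
        simp only [uF, cF, DF]; norm_num
        first | (split_ifs <;> omega) | omega
      · rw [tau_cyclic h2 (by omega), mod_eq_iff3 hn0 (cyc_arg_lt hn h1 0 (by omega)) hv]
        simp only [cF]; norm_num
        first | (split_ifs <;> omega) | omega
      · rw [tau_cyclic h2 (by omega), mod_eq_iff3 hn0 (cyc_arg_lt hn h1 1 (by omega)) hv]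
        simp only [cF]; norm_num
        first | (split_ifs <;> omega) | omega
    · by_cases hva : v = 4*a+1
      · -- O2
        refine ⟨1, a, 0, 2*a+2*(a+h), 1, 2*(a+h), by norm_num, by norm_num, by norm_num,
            by omega, by omega, by omega, by omega, by omega, by omega, ?_, ?_, ?_⟩
        · rw [tau_band h2 (by omega), mod_eq_iff3 hn0 (band_arg_lt hn h1 hha 1 (by omega)) hv]
          simp only [uF, cF, DF]; norm_num
          first | (split_ifs <;> omega) | omega
        · rw [tau_cyclic h2 (by omega), mod_eq_iff3 hn0 (cyc_arg_lt hn h1 0 (by omega)) hv]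
          simp only [cF]; norm_num
          first | (split_ifs <;> omega) | omega
        · rw [tau_cyclic h2 (by omega), mod_eq_iff3 hn0 (cyc_arg_lt hn h1 1 (by omega)) hv]
          simp only [cF]; norm_num
          first | (split_ifs <;> omega) | omega
      · by_cases hbig : 4*a+3 ≤ v
        · -- O6
          refine ⟨0, (v-1)/2, 0, (v-1)/2+2*(a+h), 1, (v-4*a-1)/2+2*(a+h), by norm_num, by norm_num, by norm_num,
              by omega, by omega, by omega, by omega, by omega, by omega, ?_, ?_, ?_⟩
          · rw [tau_cyclic h2 (by omega), mod_eq_iff3 hn0 (cyc_arg_lt hn h1 0 (by omega)) hv]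
            simp only [cF]; norm_num
            first | (split_ifs <;> omega) | omega
          · rw [tau_cyclic h2 (by omega), mod_eq_iff3 hn0 (cyc_arg_lt hn h1 0 (by omega)) hv]
            simp only [cF]; norm_num
            first | (split_ifs <;> omega) | omega
          · rw [tau_cyclic h2 (by omega), mod_eq_iff3 hn0 (cyc_arg_lt hn h1 1 (by omega)) hv]
            simp only [cF]; norm_num
            first | (split_ifs <;> omega) | omega
        · by_cases hmid : 4*a-4*h+2 ≤ v
          · -- O5
            refine ⟨0, (v-1)/2+2*(a+h), 1, (v-1)/2+2*h, 1, (v-1)/2+2*h+2*(a+h), by norm_num, by norm_num, by norm_num,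
                by omega, by omega, by omega, by omega, by omega, by omega, ?_, ?_, ?_⟩
            · rw [tau_cyclic h2 (by omega), mod_eq_iff3 hn0 (cyc_arg_lt hn h1 0 (by omega)) hv]
              simp only [cF]; norm_num
              first | (split_ifs <;> omega) | omega
            · rw [tau_cyclic h2 (by omega), mod_eq_iff3 hn0 (cyc_arg_lt hn h1 1 (by omega)) hv]
              simp only [cF]; norm_num
              first | (split_ifs <;> omega) | omega
            · rw [tau_cyclic h2 (by omega), mod_eq_iff3 hn0 (cyc_arg_lt hn h1 1 (by omega)) hv]
              simp only [cF]; norm_num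
              first | (split_ifs <;> omega) | omega
          · by_cases h41 : v % 4 = 1
            · -- O3
              refine ⟨1, h+(v-5)/4, 0, (v-1)/2+2*(a+h), 1, (v-1)/2+2*h+2*(a+h), by norm_num, by norm_num, by norm_num,
                  by omega, by omega, by omega, by omega, by omega, by omega, ?_, ?_, ?_⟩
              · rw [tau_band h2 (by omega), mod_eq_iff3 hn0 (band_arg_lt hn h1 hha 1 (by omega)) hv]
                simp only [uF, cF, DF]; norm_num
                first | (split_ifs <;> omega) | omega
              · rw [tau_cyclic h2 (by omega), mod_eq_iff3 hn0 (cyc_arg_lt hn h1 0 (by omega)) hv]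
                simp only [cF]; norm_num
                first | (split_ifs <;> omega) | omega
              · rw [tau_cyclic h2 (by omega), mod_eq_iff3 hn0 (cyc_arg_lt hn h1 1 (by omega)) hv]
                simp only [cF]; norm_num
                first | (split_ifs <;> omega) | omega
            · -- O4
              refine ⟨1, a+h+(v+1)/4, 0, (v-1)/2+2*(a+h), 1, (v-1)/2+2*h+2*(a+h), by norm_num, by norm_num, by norm_num,
                  by omega, by omega, by omega, by omega, by omega, by omega, ?_, ?_, ?_⟩
              · rw [tau_band h2 (by omega), mod_eq_iff3 hn0 (band_arg_lt hn h1 hha 1 (by omega)) hv]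
                simp only [uF, cF, DF]; norm_num
                first | (split_ifs <;> omega) | omega
              · rw [tau_cyclic h2 (by omega), mod_eq_iff3 hn0 (cyc_arg_lt hn h1 0 (by omega)) hv]
                simp only [cF]; norm_num
                first | (split_ifs <;> omega) | omega
              · rw [tau_cyclic h2 (by omega), mod_eq_iff3 hn0 (cyc_arg_lt hn h1 1 (by omega)) hv]
                simp only [cF]; norm_num
                first | (split_ifs <;> omega) | omega

end wit

section counts

lemma three_le_card_of_mem {α : Type*} [DecidableEq α] {S : Finset α} {x y z : α}
    (hx : x ∈ S) (hy : y ∈ S) (hz : z ∈ S) (hxy : x ≠ y) (hxz : x ≠ z) (hyz : y ≠ z) :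
    3 ≤ S.card := by
  have hsub : ({x, y, z} : Finset α) ⊆ S := by
    intro w hw
    simp only [mem_insert, mem_singleton] at hw
    rcases hw with rfl | rfl | rfl <;> assumption
  have h3 : ({x, y, z} : Finset α).card = 3 := by
    rw [card_insert_of_notMem (by simp [hxy, hxz]),
        card_insert_of_notMem (by simp [hyz]), card_singleton]
  rw [← h3]
  exact card_le_card hsub

lemma all_eq_three {N : ℕ} (f : Fin N → ℕ) (hf : ∀ x, 3 ≤ f x)
    (hs : ∑ x, f x = 3*N) : ∀ x, f x = 3 := by
  by_contra hc
  push_neg at hc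
  obtain ⟨x, hx⟩ := hc
  have hlt : ∑ _y : Fin N, (3:ℕ) < ∑ y, f y :=
    Finset.sum_lt_sum (fun i _ => hf i) ⟨x, Finset.mem_univ x, by have := hf x; omega⟩
  simp only [Finset.sum_const, Finset.card_univ, Fintype.card_fin, smul_eq_mul] at hlt
  omega

end counts

section lohi

def loF (a i : ℕ) : ℕ := if i < a then 2*i else if i = a then 0
  else if i < 2*a+1 then 2*(i-a)-1 else i

def hiF (a i : ℕ) : ℕ := if i < a then 2*i+2 else if i = a then 2*a
  else if i < 2*a+1 then 2*(i-a)-1 else i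

lemma lo_le_w (a i j : ℕ) : loF a i ≤ wF a i j ∧ wF a i j ≤ hiF a i := by
  unfold loF hiF wF DF; split_ifs <;> omega

lemma even_sum (a : ℕ) : (∑ x ∈ range a, 2*x) + a = a*a := by
  induction a with
  | zero => simp
  | succ k ih =>
    rw [Finset.sum_range_succ]
    have hr : (k+1)*(k+1) = k*k + 2*k + 1 := by ring
    linarith

lemma odd_sum (a : ℕ) : (∑ x ∈ range a, (2*x+1)) = a*a := by
  induction a with
  | zero => simp
  | succ k ih =>
    rw [Finset.sum_range_succ, ih]; ring

lemma sum_lo_hi {n a : ℕ} (hn : 2*a+1 ≤ n) :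
    (∑ x ∈ range n, loF a x) + 2*a = (∑ x ∈ range n, x) ∧
    (∑ x ∈ range n, hiF a x) = (∑ x ∈ range n, x) + 2*a := by
  have hsplit : ∀ f : ℕ → ℕ, (∑ x ∈ range n, f x)
      = (∑ x ∈ range (2*a+1), f x) + ∑ x ∈ Ico (2*a+1) n, f x := by
    intro f
    rw [range_eq_Ico, range_eq_Ico]
    exact (Finset.sum_Ico_consecutive f (Nat.zero_le (2*a+1)) hn).symm
  have hsplit2 : ∀ f : ℕ → ℕ, (∑ x ∈ range (2*a+1), f x)
      = (∑ x ∈ range a, f x) + ∑ x ∈ Ico a (2*a+1), f x := by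
    intro f
    rw [range_eq_Ico, range_eq_Ico]
    exact (Finset.sum_Ico_consecutive f (Nat.zero_le a) (show a ≤ 2*a+1 by omega)).symm
  have hIco : ∀ f : ℕ → ℕ, (∑ x ∈ Ico a (2*a+1), f x) = ∑ x ∈ range (a+1), f (a + x) := by
    intro f
    rw [Finset.sum_Ico_eq_sum_range]
    have h' : 2*a+1-a = a+1 := by omega
    rw [h']
  -- tails
  have hlo_tail : (∑ x ∈ Ico (2*a+1) n, loF a x) = ∑ x ∈ Ico (2*a+1) n, x :=
    Finset.sum_congr rfl (fun x hx => by
      have := (mem_Ico.mp hx).1; unfold loF; split_ifs <;> omega)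
  have hhi_tail : (∑ x ∈ Ico (2*a+1) n, hiF a x) = ∑ x ∈ Ico (2*a+1) n, x :=
    Finset.sum_congr rfl (fun x hx => by
      have := (mem_Ico.mp hx).1; unfold hiF; split_ifs <;> omega)
  -- heads
  have e1 : (∑ x ∈ range a, loF a x) = ∑ x ∈ range a, 2*x :=
    Finset.sum_congr rfl (fun x hx => by
      have := mem_range.mp hx; unfold loF; split_ifs <;> omega)
  have e1' : (∑ x ∈ range a, hiF a x) = (∑ x ∈ range a, (2*x+1)) + ∑ x ∈ range a, 1 := by
    rw [← Finset.sum_add_distrib]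
    exact Finset.sum_congr rfl (fun x hx => by
      have := mem_range.mp hx; unfold hiF; split_ifs <;> omega)
  have e2 : (∑ x ∈ range (a+1), loF a (a + x)) = ∑ x ∈ range a, (2*x+1) := by
    rw [Finset.sum_range_succ']
    have h'' : (∑ i ∈ range a, loF a (a + (i+1))) = ∑ i ∈ range a, (2*i+1) :=
      Finset.sum_congr rfl (fun x hx => by
        have := mem_range.mp hx; unfold loF; split_ifs <;> omega)
    have h0 : loF a (a + 0) = 0 := by unfold loF; split_ifs <;> omega
    omega
  have e2' : (∑ x ∈ range (a+1), hiF a (a + x)) = (∑ x ∈ range a, (2*x+1)) + 2*a := by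
    rw [Finset.sum_range_succ']
    have h'' : (∑ i ∈ range a, hiF a (a + (i+1))) = ∑ i ∈ range a, (2*i+1) :=
      Finset.sum_congr rfl (fun x hx => by
        have := mem_range.mp hx; unfold hiF; split_ifs <;> omega)
    have h0 : hiF a (a + 0) = 2*a := by unfold hiF; split_ifs <;> omega
    omega
  have hIcoId : (∑ x ∈ Ico a (2*a+1), x) = ∑ x ∈ range (a+1), (a + x) := hIco (fun x => x)
  have hx1 : (∑ x ∈ range (a+1), (a + x)) = (a+1)*a + ∑ x ∈ range (a+1), x := by
    rw [Finset.sum_add_distrib, Finset.sum_const, Finset.card_range, smul_eq_mul]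
  have hx2 : (∑ x ∈ range (a+1), x) * 2 = (a+1)*a := by
    rw [Finset.sum_range_id_mul_two]
    congr 1
  have hprod2 : (a+1)*a = a*a + a := by ring
  have hlink : (∑ x ∈ range a, 2*x) = 2 * ∑ x ∈ range a, x := by
    rw [Finset.mul_sum]
  have hev := even_sum a
  have hod := odd_sum a
  have hsumc : (∑ x ∈ range a, (1:ℕ)) = a := by simp
  have A1 := hsplit (loF a)
  have A2 := hsplit (hiF a)
  have A3 := hsplit (fun x => x)
  have B1 := hsplit2 (loF a)
  have B2 := hsplit2 (hiF a)
  have B3 := hsplit2 (fun x => x)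
  have C1 := hIco (loF a)
  have C2 := hIco (hiF a)
  constructor <;> linarith

end lohi

section main
variable {n a h : ℕ}

set_option maxHeartbeats 1600000 in
lemma main (hn : n = 4*(a+h)) (h1 : 1 ≤ h) (hha : h ≤ a) :
    ∃ L : Fin n → Fin n → Fin n, IsLatinSquare L ∧ (∃ K, IsPlex L 3 K) ∧ ¬ HasTransversal L := by
  have hn0 : 0 < n := by omega
  have h2 : (2:ℕ) ∣ n := ⟨2*(a+h), by omega⟩
  have h2a : 2*a < n := by omega
  haveI : NeZero n := ⟨by omega⟩
  set Lq : Fin n → Fin n → Fin n := fun i j => ⟨lf n a i.1 j.1, Nat.mod_lt _ hn0⟩ with hLq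
  set sg : Fin 3 → Fin n → Fin n := fun m i => ⟨sF n a h m.1 i.1, Nat.mod_lt _ hn0⟩ with hsg
  have sgInj : ∀ m, Function.Injective (sg m) := by
    intro m i i' he
    have hval : sF n a h m.1 i.1 = sF n a h m.1 i'.1 := congrArg Fin.val he
    exact Fin.ext (sF_inj hha h2a i.isLt i'.isLt hval)
  have sgBij : ∀ m, Function.Bijective (sg m) :=
    fun m => Finite.injective_iff_bijective.mp (sgInj m)
  have sgNe : ∀ (m m' : Fin 3) (i : Fin n), m ≠ m' → sg m i ≠ sg m' i := by
    intro m m' i hmm he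
    have hval : sF n a h m.1 i.1 = sF n a h m'.1 i.1 := congrArg Fin.val he
    exact sF_ne hn h1 hha m.isLt m'.isLt (fun hc => hmm (Fin.ext hc)) i.isLt hval
  set F : Fin 3 × Fin n → Fin n × Fin n := fun q => (q.2, sg q.1 q.2) with hF
  have Finj : Function.Injective F := by
    intro q q' he
    have e1 : q.2 = q'.2 := congrArg Prod.fst he
    have e2 : sg q.1 q.2 = sg q'.1 q'.2 := congrArg Prod.snd he
    rw [← e1] at e2
    have e3 : q.1 = q'.1 := by
      by_contra hc
      exact sgNe _ _ _ hc e2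
    exact Prod.ext e3 e1
  set K : Finset (Fin n × Fin n) := Finset.univ.image F with hK
  have hmemK : ∀ (m : Fin 3) (i : Fin n), (i, sg m i) ∈ K := fun m i =>
    Finset.mem_image.mpr ⟨(m, i), Finset.mem_univ _, rfl⟩
  have hKcard : K.card = 3*n := by
    rw [hK, Finset.card_image_of_injective _ Finj, Finset.card_univ]
    simp
  have hrow3 : ∀ i : Fin n, 3 ≤ (K.filter fun p => p.1 = i).card := by
    intro i
    refine three_le_card_of_mem (x := (i, sg 0 i)) (y := (i, sg 1 i)) (z := (i, sg 2 i))
      (Finset.mem_filter.mpr ⟨hmemK 0 i, rfl⟩)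
      (Finset.mem_filter.mpr ⟨hmemK 1 i, rfl⟩)
      (Finset.mem_filter.mpr ⟨hmemK 2 i, rfl⟩) ?_ ?_ ?_
    · intro hc; exact sgNe 0 1 i (by decide) (congrArg Prod.snd hc)
    · intro hc; exact sgNe 0 2 i (by decide) (congrArg Prod.snd hc)
    · intro hc; exact sgNe 1 2 i (by decide) (congrArg Prod.snd hc)
  have hcol3 : ∀ x : Fin n, 3 ≤ (K.filter fun p => p.2 = x).card := by
    intro x
    obtain ⟨i0, hi0⟩ := (sgBij 0).2 x
    obtain ⟨i1, hi1⟩ := (sgBij 1).2 x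
    obtain ⟨i2, hi2⟩ := (sgBij 2).2 x
    have hne : ∀ (m m' : Fin 3) (im im' : Fin n), m ≠ m' → sg m im = x → sg m' im' = x →
        im ≠ im' := by
      intro m m' im im' hmm hm hm' hc
      subst hc
      exact sgNe m m' im hmm (hm.trans hm'.symm)
    refine three_le_card_of_mem (x := (i0, x)) (y := (i1, x)) (z := (i2, x))
      (Finset.mem_filter.mpr ⟨by rw [← hi0]; exact hmemK 0 i0, rfl⟩)
      (Finset.mem_filter.mpr ⟨by rw [← hi1]; exact hmemK 1 i1, rfl⟩)
      (Finset.mem_filter.mpr ⟨by rw [← hi2]; exact hmemK 2 i2, rfl⟩) ?_ ?_ ?_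
    · intro hc; exact hne 0 1 i0 i1 (by decide) hi0 hi1 (congrArg Prod.fst hc)
    · intro hc; exact hne 0 2 i0 i2 (by decide) hi0 hi2 (congrArg Prod.fst hc)
    · intro hc; exact hne 1 2 i1 i2 (by decide) hi1 hi2 (congrArg Prod.fst hc)
  have hsym3 : ∀ s : Fin n, 3 ≤ (K.filter fun p => Lq p.1 p.2 = s).card := by
    intro s
    obtain ⟨m1, i1, m2, i2, m3, i3, hm1, hm2, hm3, hi1, hi2, hi3, h12, h13, h23, ht1, ht2, ht3⟩ :=
      sym_witness hn h1 hha s.isLt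
    have mk : ∀ (m i : ℕ) (hm : m < 3) (hi : i < n), tauF n a h m i = s.1 →
        ((⟨i, hi⟩ : Fin n), sg ⟨m, hm⟩ ⟨i, hi⟩) ∈ K.filter fun p => Lq p.1 p.2 = s := by
      intro m i hm hi ht
      refine Finset.mem_filter.mpr ⟨hmemK _ _, ?_⟩
      apply Fin.ext
      exact ht
    refine three_le_card_of_mem (mk m1 i1 hm1 hi1 ht1) (mk m2 i2 hm2 hi2 ht2)
      (mk m3 i3 hm3 hi3 ht3) ?_ ?_ ?_
    · intro hc; exact h12 (congrArg (fun p => (Prod.fst p).1) hc)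
    · intro hc; exact h13 (congrArg (fun p => (Prod.fst p).1) hc)
    · intro hc; exact h23 (congrArg (fun p => (Prod.fst p).1) hc)
  have hrowTot : ∑ i : Fin n, (K.filter fun p => p.1 = i).card = K.card :=
    (Finset.card_eq_sum_card_fiberwise (fun x _ => Finset.mem_univ x.1)).symm
  have hcolTot : ∑ j : Fin n, (K.filter fun p => p.2 = j).card = K.card :=
    (Finset.card_eq_sum_card_fiberwise (fun x _ => Finset.mem_univ x.2)).symm
  have hsymTot : ∑ s : Fin n, (K.filter fun p => Lq p.1 p.2 = s).card = K.card :=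
    (Finset.card_eq_sum_card_fiberwise (fun x _ => Finset.mem_univ (Lq x.1 x.2))).symm
  have hrowEq := all_eq_three _ hrow3 (by rw [hrowTot, hKcard])
  have hcolEq := all_eq_three _ hcol3 (by rw [hcolTot, hKcard])
  have hsymEq := all_eq_three _ hsym3 (by rw [hsymTot, hKcard])
  refine ⟨Lq, ⟨?_, ?_⟩, ⟨K, hrowEq, hcolEq, hsymEq⟩, ?_⟩
  · intro i
    apply Finite.injective_iff_bijective.mp
    intro j j' he
    exact Fin.ext (lf_row_inj h2 h2a j.isLt j'.isLt (congrArg Fin.val he))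
  · intro j
    apply Finite.injective_iff_bijective.mp
    intro i i' he
    exact Fin.ext (lf_col_inj h2a i.isLt i'.isLt (congrArg Fin.val he))
  · -- no transversal
    rintro ⟨K1, hr1, hc1, hs1⟩
    set W : Fin n × Fin n → ℕ := fun p => wF a p.1.1 p.2.1 with hW
    have hcast : ∀ p : Fin n × Fin n, ((Lq p.1 p.2).1 : ZMod n) = (p.2.1 : ZMod n) + (W p : ZMod n) := by
      intro p
      show (((p.2.1 + wF a p.1.1 p.2.1) % n : ℕ) : ZMod n) = _
      rw [ZMod.natCast_mod]
      push_cast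
      rfl
    have hsum1 : (∑ p ∈ K1, ((Lq p.1 p.2).1 : ZMod n)) = ∑ s : Fin n, ((s.1 : ℕ) : ZMod n) := by
      rw [← Finset.sum_fiberwise K1 (fun p => Lq p.1 p.2) (fun p => ((Lq p.1 p.2).1 : ZMod n))]
      refine Finset.sum_congr rfl (fun s _ => ?_)
      have hcg : ∀ p ∈ K1.filter (fun p => Lq p.1 p.2 = s),
          ((Lq p.1 p.2).1 : ZMod n) = ((s.1 : ℕ) : ZMod n) := by
        intro p hp
        rw [(Finset.mem_filter.mp hp).2]
      rw [Finset.sum_congr rfl hcg, Finset.sum_const, hs1 s, one_smul]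
    have hsum2 : (∑ p ∈ K1, ((p.2.1 : ℕ) : ZMod n)) = ∑ s : Fin n, ((s.1 : ℕ) : ZMod n) := by
      rw [← Finset.sum_fiberwise K1 (fun p => p.2) (fun p => ((p.2.1 : ℕ) : ZMod n))]
      refine Finset.sum_congr rfl (fun s _ => ?_)
      have hcg : ∀ p ∈ K1.filter (fun p => p.2 = s),
          ((p.2.1 : ℕ) : ZMod n) = ((s.1 : ℕ) : ZMod n) := by
        intro p hp
        rw [(Finset.mem_filter.mp hp).2]
      rw [Finset.sum_congr rfl hcg, Finset.sum_const, hc1 s, one_smul]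
    have hWzero : ((∑ p ∈ K1, W p : ℕ) : ZMod n) = 0 := by
      push_cast
      have hdiff : (∑ p ∈ K1, (W p : ZMod n))
          = (∑ p ∈ K1, ((Lq p.1 p.2).1 : ZMod n)) - ∑ p ∈ K1, ((p.2.1 : ℕ) : ZMod n) := by
        rw [← Finset.sum_sub_distrib]
        refine Finset.sum_congr rfl (fun p _ => ?_)
        rw [hcast p]
        ring
      rw [hdiff, hsum1, hsum2, sub_self]
    have hdvd : n ∣ ∑ p ∈ K1, W p := (ZMod.natCast_eq_zero_iff _ n).mp hWzero
    have hfib : ∀ i : Fin n, ∃ p : Fin n × Fin n,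
        K1.filter (fun p => p.1 = i) = {p} ∧ p.1 = i := by
      intro i
      obtain ⟨p, hp⟩ := Finset.card_eq_one.mp (hr1 i)
      refine ⟨p, hp, ?_⟩
      have hmem : p ∈ K1.filter (fun p => p.1 = i) := by rw [hp]; exact Finset.mem_singleton_self p
      exact (Finset.mem_filter.mp hmem).2
    have hsumW : (∑ i : Fin n, ∑ p ∈ K1.filter (fun p => p.1 = i), W p) = ∑ p ∈ K1, W p :=
      Finset.sum_fiberwise K1 (fun p => p.1) W
    have hboundLo : (∑ i : Fin n, loF a i.1) ≤ ∑ p ∈ K1, W p := by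
      rw [← hsumW]
      refine Finset.sum_le_sum (fun i _ => ?_)
      obtain ⟨p, hp, hpi⟩ := hfib i
      rw [hp, Finset.sum_singleton, ← hpi]
      exact (lo_le_w a p.1.1 p.2.1).1
    have hboundHi : (∑ p ∈ K1, W p) ≤ ∑ i : Fin n, hiF a i.1 := by
      rw [← hsumW]
      refine Finset.sum_le_sum (fun i _ => ?_)
      obtain ⟨p, hp, hpi⟩ := hfib i
      rw [hp, Finset.sum_singleton, ← hpi]
      exact (lo_le_w a p.1.1 p.2.1).2
    have hFinLo : (∑ i : Fin n, loF a i.1) = ∑ x ∈ range n, loF a x :=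
      Fin.sum_univ_eq_sum_range (fun x => loF a x) n
    have hFinHi : (∑ i : Fin n, hiF a i.1) = ∑ x ∈ range n, hiF a x :=
      Fin.sum_univ_eq_sum_range (fun x => hiF a x) n
    obtain ⟨hgLo, hgHi⟩ := sum_lo_hi (a := a) (show 2*a+1 ≤ n by omega)
    obtain ⟨q, hq⟩ := hdvd
    have g21n : (∑ x ∈ range n, x) * 2 = n*(n-1) := Finset.sum_range_id_mul_two n
    have hnn : 2*(∑ x ∈ range n, x) + n = n*n := by
      have hstep : n*(n-1) + n = n*n := by
        cases n with
        | zero => omega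
        | succ k => simp only [Nat.succ_sub_one]; ring
      linarith
    have hsq : n*n = 16*((a+h)*(a+h)) := by rw [hn]; ring
    rcases le_or_gt (2*(a+h)) q with hcase | hcase
    · have k1 : 8*((a+h)*(a+h)) ≤ ∑ p ∈ K1, W p := by
        calc 8*((a+h)*(a+h)) = n*(2*(a+h)) := by rw [hn]; ring
        _ ≤ n*q := Nat.mul_le_mul_left n hcase
        _ = ∑ p ∈ K1, W p := hq.symm
      generalize hY : (a+h)*(a+h) = Y at k1 hsq
      omega
    · have k1 : (∑ p ∈ K1, W p) + n ≤ 8*((a+h)*(a+h)) := by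
        calc (∑ p ∈ K1, W p) + n = n*q + n := by rw [hq]
        _ = n*(q+1) := by ring
        _ ≤ n*(2*(a+h)) := Nat.mul_le_mul_left n hcase
        _ = 8*((a+h)*(a+h)) := by rw [hn]; ring
      generalize hY : (a+h)*(a+h) = Y at k1 hsq
      omega

end main

end pars

end ST17

theorem stmt17 (n : ℕ) (h4 : 4 ∣ n) (h8 : 8 ≤ n) :
    ∃ L : Fin n → Fin n → Fin n, IsLatinSquare L ∧
      (∃ K, IsPlex L 3 K) ∧ ¬ HasTransversal L := by
  obtain ⟨k, rfl⟩ := h4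
  exact ST17.main (a := k - k/2) (h := k/2) (by omega) (by omega) (by omega)
end

section
/- For even n → ∞, the number of species (main classes) of transversal-free latin squares of order n is at least n^{n^{3/2}(1/2 − o(1))}. Concretely: for every ε > 0 there exists N such that for all even n ≥ N, the number of latin squares of order n with no transversal is at least n^{(1/2−ε)n^{3/2}}, and since each species contains at most 6(n!)³ latin squares, the same asymptotic lower bound holds for the number of species. -/
open scoped Classical

/-- The triples (row, column, symbol) of a latin square, encoded as functions `Fin 3 → Fin n`. -/
def triples {n : ℕ} (L : Fin n → Fin n → Fin n) : Set (Fin 3 → Fin n) :=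
  {v | L (v 0) (v 1) = v 2}

/-- Two latin squares are in the same species if one is obtained from the other by
permuting rows, columns and symbols and permuting the three coordinate roles. -/
def SameSpecies {n : ℕ} (L₁ L₂ : Fin n → Fin n → Fin n) : Prop :=
  ∃ (σ : Equiv.Perm (Fin 3)) (f : Fin 3 → Equiv.Perm (Fin n)),
    ∀ v : Fin 3 → Fin n, v ∈ triples L₁ ↔ (fun i => f i (v (σ i))) ∈ triples L₂



namespace TF

/-- offset table for arcs of length 4: `u4tab p s`, `p < 3`, `s < 4`. -/
def u4tab : ℕ → ℕ → ℕ
| 0, 0 => 1 | 0, 1 => 2 | 0, 2 => 0 | 0, 3 => 1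
| 1, 0 => 2 | 1, 1 => 0 | 1, 2 => 2 | 1, 3 => 0
| 2, 0 => 0 | 2, 1 => 1 | 2, 2 => 1 | 2, 3 => 2
| _, _ => 0

/-- offset table for arcs of length 3: `u3tab b p s`, `b < 2`, `p < 3`, `s < 3`. -/
def u3tab : ℕ → ℕ → ℕ → ℕ
| 0, 0, 0 => 1 | 0, 0, 1 => 2 | 0, 0, 2 => 0
| 0, 1, 0 => 2 | 0, 1, 1 => 0 | 0, 1, 2 => 1
| 0, 2, 0 => 0 | 0, 2, 1 => 1 | 0, 2, 2 => 2
| 1, 0, 0 => 2 | 1, 0, 1 => 0 | 1, 0, 2 => 1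
| 1, 1, 0 => 1 | 1, 1, 1 => 2 | 1, 1, 2 => 0
| 1, 2, 0 => 0 | 1, 2, 1 => 1 | 1, 2, 2 => 2
| _, _, _ => 0

/-- start of the 3-arc region -/
def mm (n : ℕ) : ℕ := 4 * (n % 3)
/-- number of perturbed rows -/
def kk (n : ℕ) : ℕ := 3 * (n / 14)

/-- the offset of cell (i,j), for i < kk n -/
def uu (n : ℕ) (χ : ℕ → ℕ → ℕ) (i j : ℕ) : ℕ :=
  if j < mm n then u4tab (i % 3) (j % 4)
  else u3tab (χ (i / 3) ((j - mm n) / 3) % 2) (i % 3) ((j - mm n) % 3)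

/-- the latin square entries, as natural numbers -/
def lf (n : ℕ) (χ : ℕ → ℕ → ℕ) (i j : ℕ) : ℕ :=
  if i < kk n then (j + 3 * (i / 3) + uu n χ i j) % n else (i + j) % n

lemma u4tab_le : ∀ p < 3, ∀ s < 4, u4tab p s ≤ 2 := by decide

lemma u3tab_le : ∀ b < 2, ∀ p < 3, ∀ s < 3, u3tab b p s ≤ 2 := by decide

lemma uu_le (n : ℕ) (χ : ℕ → ℕ → ℕ) (i j : ℕ) : uu n χ i j ≤ 2 := by
  unfold uu
  split
  · exact u4tab_le _ (Nat.mod_lt _ (by norm_num)) _ (Nat.mod_lt _ (by norm_num))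
  · exact u3tab_le _ (Nat.mod_lt _ (by norm_num)) _ (Nat.mod_lt _ (by norm_num)) _
      (Nat.mod_lt _ (by norm_num))

/-- within a 4-arc or between consecutive 4-arcs -/
lemma T1 : ∀ (p : Fin 3) (s s' : Fin 4) (δ : Fin 3), (δ:ℕ) ≠ 0 →
    ((s':ℕ) = s + δ ∨ (s':ℕ) + 4 = s + δ) → u4tab p s' + δ ≠ u4tab p s := by decide

/-- boundary from the 4-region to the 3-region -/
lemma T2 : ∀ p < 3, ∀ b < 2,
    u3tab b p 0 + 1 ≠ u4tab p 3 ∧ u3tab b p 0 + 2 ≠ u4tab p 2 ∧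
    u3tab b p 1 + 2 ≠ u4tab p 3 := by decide

/-- within a 3-arc or between consecutive 3-arcs -/
lemma T3 : ∀ (p : Fin 3) (b b' : Fin 2) (s s' δ : Fin 3), (δ:ℕ) ≠ 0 →
    ((s':ℕ) = s + δ → u3tab b p s' + δ ≠ u3tab b p s) ∧
    ((s':ℕ) + 3 = s + δ → u3tab b' p s' + δ ≠ u3tab b p s) := by decide

/-- wraparound, from 3-region back to the 4-region -/
lemma T4 : ∀ p < 3, ∀ b < 2,
    u4tab p 0 + 1 ≠ u3tab b p 2 ∧ u4tab p 1 + 2 ≠ u3tab b p 2 ∧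
    u4tab p 0 + 2 ≠ u3tab b p 1 := by decide

/-- wraparound, from 3-region back to the 3-region -/
lemma T5 : ∀ p < 3, ∀ b < 2, ∀ b' < 2,
    u3tab b' p 0 + 1 ≠ u3tab b p 2 ∧ u3tab b' p 1 + 2 ≠ u3tab b p 2 ∧
    u3tab b' p 0 + 2 ≠ u3tab b p 1 := by decide

/-- columns of the 4-table are injective -/
lemma C1 : ∀ s < 4, ∀ p < 3, ∀ p' < 3, u4tab p s = u4tab p' s → p = p' := by decide

/-- columns of the 3-tables are injective -/
lemma C2 : ∀ b < 2, ∀ s < 3, ∀ p < 3, ∀ p' < 3, u3tab b p s = u3tab b p' s → p = p' := by decide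

end TF
namespace TF

lemma upos : ∀ {n:ℕ}, 14 ≤ n → 0 < n := fun h => by omega

/-- no collisions at cyclic distance 1 or 2 in a row -/
lemma no_step {n : ℕ} (χ : ℕ → ℕ → ℕ) (hn : 14 ≤ n) (i j δ : ℕ) (hj : j < n)
    (hδ : δ = 1 ∨ δ = 2) : uu n χ i ((j + δ) % n) + δ ≠ uu n χ i j := by
  have hp : i % 3 < 3 := Nat.mod_lt _ (by norm_num)
  set p := i % 3 with hpdef
  have hm : mm n = 4 * (n % 3) := rfl
  have hb : ∀ r t : ℕ, χ r t % 2 < 2 := fun r t => Nat.mod_lt _ (by norm_num)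
  by_cases hw : j + δ < n
  · -- no wraparound
    have hJ : (j + δ) % n = j + δ := Nat.mod_eq_of_lt hw
    rw [hJ]
    by_cases hA : j + δ < mm n
    · -- both in the 4-region
      have hjm : j < mm n := by omega
      have h4 : (j + δ) % 4 = j % 4 + δ ∨ (j + δ) % 4 + 4 = j % 4 + δ := by omega
      rw [uu, if_pos hA, uu, if_pos hjm]
      exact T1 ⟨p, hp⟩ ⟨j % 4, by omega⟩ ⟨(j + δ) % 4, by omega⟩ ⟨δ, by omega⟩
        (by simp; omega) (by simpa using h4)
    · by_cases hB : j < mm n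
      · -- boundary from 4-region to 3-region
        rw [uu, if_neg hA, uu, if_pos hB]
        have hd1 : (j + δ - mm n) / 3 = 0 := by omega
        have hd2 : (j + δ - mm n) % 3 = j + δ - mm n := by omega
        rw [hd1, hd2]
        set b' := χ (i / 3) 0 % 2 with hb'
        obtain ⟨e1, e2, e3⟩ := T2 p hp b' (hb _ _)
        rcases hδ with h1 | h2
        · -- δ = 1 : j = mm - 1, target 0, j%4 = 3
          have : j + δ - mm n = 0 := by omega
          have h4 : j % 4 = 3 := by omega
          rw [this, h4, h1] at *
          exact e1
        · -- δ = 2 : j = mm-1 (target 1, j%4=3) or j = mm-2 (target 0, j%4=2)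
          rcases (by omega : j + 2 = mm n ∨ j + 1 = mm n) with hc | hc
          · have : j + δ - mm n = 0 := by omega
            have h4 : j % 4 = 2 := by omega
            rw [this, h4, h2] at *
            exact e2
          · have : j + δ - mm n = 1 := by omega
            have h4 : j % 4 = 3 := by omega
            rw [this, h4, h2] at *
            exact e3
      · -- both in the 3-region
        rw [uu, if_neg hA, uu, if_neg hB]
        have hs : j + δ - mm n = (j - mm n) + δ := by omega
        by_cases hC : (j - mm n) % 3 + δ < 3
        · -- same arc
          have e1 : (j + δ - mm n) / 3 = (j - mm n) / 3 := by omega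
          have e2 : (j + δ - mm n) % 3 = (j - mm n) % 3 + δ := by omega
          rw [e1, e2]
          exact (T3 ⟨p, hp⟩ ⟨χ (i / 3) ((j - mm n) / 3) % 2, hb _ _⟩
            ⟨χ (i / 3) ((j - mm n) / 3) % 2, hb _ _⟩ ⟨(j - mm n) % 3, by omega⟩
            ⟨(j - mm n) % 3 + δ, by omega⟩ ⟨δ, by omega⟩ (by simp; omega)).1 (by simp)
        · -- next arc
          have e1 : (j + δ - mm n) / 3 = (j - mm n) / 3 + 1 := by omega
          have e2 : (j + δ - mm n) % 3 + 3 = (j - mm n) % 3 + δ := by omega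
          rw [e1]
          exact (T3 ⟨p, hp⟩ ⟨χ (i / 3) ((j - mm n) / 3) % 2, hb _ _⟩
            ⟨χ (i / 3) ((j - mm n) / 3 + 1) % 2, hb _ _⟩ ⟨(j - mm n) % 3, by omega⟩
            ⟨(j + δ - mm n) % 3, by omega⟩ ⟨δ, by omega⟩ (by simp; omega)).2 (by simpa using e2)
  · -- wraparound
    have hJ : (j + δ) % n = j + δ - n := by
      rw [Nat.mod_eq_sub_mod (by omega)]
      exact Nat.mod_eq_of_lt (by omega)
    have hmm : mm n ≤ 8 := by omega
    have hjm : ¬ j < mm n := by omega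
    have h3 : (n - mm n) % 3 = 0 := by rw [hm]; omega
    rw [hJ, uu, uu, if_neg hjm]
    set b := χ (i / 3) ((j - mm n) / 3) % 2 with hbdef
    by_cases hD : j + δ - n < mm n
    · -- land in the 4-region
      rw [if_pos hD]
      obtain ⟨e1, e2, e3⟩ := T4 p hp b (hb _ _)
      rcases hδ with h1 | h2
      · have hj2 : j = n - 1 := by omega
        have hs : (j - mm n) % 3 = 2 := by omega
        have ht : (j + δ - n) % 4 = 0 := by omega
        rw [ht, hs, h1] at *; exact e1
      · rcases (by omega : j = n - 1 ∨ j = n - 2) with hc | hc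
        · have hs : (j - mm n) % 3 = 2 := by omega
          have ht : (j + δ - n) % 4 = 1 := by omega
          rw [ht, hs, h2] at *; exact e2
        · have hs : (j - mm n) % 3 = 1 := by omega
          have ht : (j + δ - n) % 4 = 0 := by omega
          rw [ht, hs, h2] at *; exact e3
    · -- land back in the 3-region (mm n = 0)
      have hm0 : mm n = 0 := by omega
      rw [if_neg hD]
      set b' := χ (i / 3) ((j + δ - n - mm n) / 3) % 2 with hb'def
      obtain ⟨e1, e2, e3⟩ := T5 p hp b (hb _ _) b' (hb _ _)
      rcases hδ with h1 | h2
      · have hj2 : j = n - 1 := by omega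
        have hs : (j - mm n) % 3 = 2 := by omega
        have ht : (j + δ - n - mm n) % 3 = 0 := by omega
        rw [ht, hs, h1] at *; exact e1
      · rcases (by omega : j = n - 1 ∨ j = n - 2) with hc | hc
        · have hs : (j - mm n) % 3 = 2 := by omega
          have ht : (j + δ - n - mm n) % 3 = 1 := by omega
          rw [ht, hs, h2] at *; exact e2
        · have hs : (j - mm n) % 3 = 1 := by omega
          have ht : (j + δ - n - mm n) % 3 = 0 := by omega
          rw [ht, hs, h2] at *; exact e3

end TF
namespace TF

lemma lf_lt {n : ℕ} (χ : ℕ → ℕ → ℕ) (hn : 0 < n) (i j : ℕ) : lf n χ i j < n := by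
  unfold lf; split <;> exact Nat.mod_lt _ hn

lemma kk_le {n : ℕ} : kk n ≤ n := by unfold kk; omega

lemma row_inj {n : ℕ} (χ : ℕ → ℕ → ℕ) (hn : 14 ≤ n) (i j j' : ℕ) (hj : j < n) (hj' : j' < n)
    (h : lf n χ i j = lf n χ i j') : j = j' := by
  unfold lf at h
  by_cases hik : i < kk n
  · rw [if_pos hik, if_pos hik] at h
    set a := 3 * (i / 3)
    set W := uu n χ i j with hW
    set W' := uu n χ i j' with hW'
    have hWle : W ≤ 2 := uu_le n χ i j
    have hW'le : W' ≤ 2 := uu_le n χ i j'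
    have hmod : (j + a + W) ≡ (j' + a + W') [MOD n] := h
    have hmod2 : (j + W) ≡ (j' + W') [MOD n] := by
      have h1 : a + (j + W) ≡ a + (j' + W') [MOD n] := by
        have e1 : a + (j + W) = j + a + W := by ring
        have e2 : a + (j' + W') = j' + a + W' := by ring
        rw [e1, e2]; exact hmod
      exact Nat.ModEq.add_left_cancel' a h1
    have hdvd : (n:ℤ) ∣ (j' + W' : ℕ) - ((j + W : ℕ) : ℤ) := hmod2.dvd
    obtain ⟨c, hc⟩ := hdvd
    have hcast : ((j' + W' : ℕ) : ℤ) = (j' : ℤ) + W' := by push_cast; ring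
    have hcast2 : ((j + W : ℕ) : ℤ) = (j : ℤ) + W := by push_cast; ring
    rw [hcast, hcast2] at hc
    have hjZ : (j : ℤ) < n := by exact_mod_cast hj
    have hj'Z : (j' : ℤ) < n := by exact_mod_cast hj'
    have hWZ : (W : ℤ) ≤ 2 := by exact_mod_cast hWle
    have hW'Z : (W' : ℤ) ≤ 2 := by exact_mod_cast hW'le
    have hnZ : (14 : ℤ) ≤ n := by exact_mod_cast hn
    have hc1 : c = 0 ∨ c = 1 ∨ c = -1 := by
      rcases lt_trichotomy c 0 with hlt | heq | hgt
      · right; right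
        by_contra hne
        have : c ≤ -2 := by omega
        nlinarith [Int.natCast_nonneg j, Int.natCast_nonneg j', Int.natCast_nonneg W,
          Int.natCast_nonneg W']
      · left; exact heq
      · right; left
        by_contra hne
        have : 2 ≤ c := by omega
        nlinarith [Int.natCast_nonneg j, Int.natCast_nonneg j', Int.natCast_nonneg W,
          Int.natCast_nonneg W']
    rcases hc1 with h0 | h1 | hm1
    · -- no wrap : j' + W' = j + W
      rw [h0, mul_zero] at hc
      have heqn : j' + W' = j + W := by omega
      rcases lt_trichotomy j j' with hlt | heq | hgt
      · exfalso
        have hδ : j' - j = 1 ∨ j' - j = 2 := by omega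
        have := no_step χ hn i j (j' - j) hj hδ
        rw [show j + (j' - j) = j' by omega, Nat.mod_eq_of_lt hj'] at this
        omega
      · exact heq
      · exfalso
        have hδ : j - j' = 1 ∨ j - j' = 2 := by omega
        have := no_step χ hn i j' (j - j') hj' hδ
        rw [show j' + (j - j') = j by omega, Nat.mod_eq_of_lt hj] at this
        omega
    · -- wrap forward : j' + W' = j + W + n
      exfalso
      rw [h1, mul_one] at hc
      have heqn : j' + W' = j + W + n := by omega
      have hδ : j + n - j' = 1 ∨ j + n - j' = 2 := by omega
      have := no_step χ hn i j' (j + n - j') hj' hδ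
      rw [show j' + (j + n - j') = j + n by omega] at this
      rw [show (j + n) % n = j by rw [Nat.add_mod_right]; exact Nat.mod_eq_of_lt hj] at this
      omega
    · -- wrap backward : j + W = j' + W' + n
      exfalso
      rw [hm1, mul_neg_one] at hc
      have heqn : j + W = j' + W' + n := by omega
      have hδ : j' + n - j = 1 ∨ j' + n - j = 2 := by omega
      have := no_step χ hn i j (j' + n - j) hj hδ
      rw [show j + (j' + n - j) = j' + n by omega] at this
      rw [show (j' + n) % n = j' by rw [Nat.add_mod_right]; exact Nat.mod_eq_of_lt hj'] at this
      omega
  · rw [if_neg hik, if_neg hik] at h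
    have hmod : (i + j) ≡ (i + j') [MOD n] := h
    have := (Nat.ModEq.add_left_cancel' i hmod)
    rwa [Nat.ModEq, Nat.mod_eq_of_lt hj, Nat.mod_eq_of_lt hj'] at this

lemma col_inj {n : ℕ} (χ : ℕ → ℕ → ℕ) (hn : 14 ≤ n) (j i i' : ℕ) (hi : i < n) (hi' : i' < n)
    (h : lf n χ i j = lf n χ i' j) : i = i' := by
  have hk3 : 3 * (kk n / 3) = kk n := by unfold kk; omega
  have hkn : kk n + 2 < n := by unfold kk; omega
  have key : ∀ x, x < kk n → 3 * (x / 3) + uu n χ x j < kk n := by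
    intro x hx
    have := uu_le n χ x j
    omega
  unfold lf at h
  by_cases h1 : i < kk n <;> by_cases h2 : i' < kk n
  · rw [if_pos h1, if_pos h2] at h
    have hmod : (j + (3 * (i / 3) + uu n χ i j)) ≡ (j + (3 * (i' / 3) + uu n χ i' j)) [MOD n] := by
      have e1 : j + (3 * (i / 3) + uu n χ i j) = j + 3 * (i / 3) + uu n χ i j := by ring
      have e2 : j + (3 * (i' / 3) + uu n χ i' j) = j + 3 * (i' / 3) + uu n χ i' j := by ring
      rw [e1, e2]; exact h
    have hmod2 := Nat.ModEq.add_left_cancel' j hmod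
    have hlt1 := key i h1
    have hlt2 := key i' h2
    have heq : 3 * (i / 3) + uu n χ i j = 3 * (i' / 3) + uu n χ i' j := by
      rwa [Nat.ModEq, Nat.mod_eq_of_lt (by omega), Nat.mod_eq_of_lt (by omega)] at hmod2
    have hu1 := uu_le n χ i j
    have hu2 := uu_le n χ i' j
    have hdiv : i / 3 = i' / 3 := by omega
    have huu : uu n χ i j = uu n χ i' j := by omega
    -- now use injectivity of the table columns
    have hpp : i % 3 = i' % 3 := by
      unfold uu at huu
      rw [hdiv] at huu
      by_cases hjm : j < mm n
      · rw [if_pos hjm, if_pos hjm] at huu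
        exact C1 _ (Nat.mod_lt _ (by norm_num)) _ (Nat.mod_lt _ (by norm_num)) _
          (Nat.mod_lt _ (by norm_num)) huu
      · rw [if_neg hjm, if_neg hjm] at huu
        exact C2 _ (Nat.mod_lt _ (by norm_num)) _ (Nat.mod_lt _ (by norm_num)) _
          (Nat.mod_lt _ (by norm_num)) _ (Nat.mod_lt _ (by norm_num)) huu
    omega
  · exfalso
    rw [if_pos h1, if_neg h2] at h
    have hmod : (j + (3 * (i / 3) + uu n χ i j)) ≡ (j + i') [MOD n] := by
      have e1 : j + (3 * (i / 3) + uu n χ i j) = j + 3 * (i / 3) + uu n χ i j := by ring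
      rw [e1]; rw [show j + i' = i' + j by ring]; exact h
    have hmod2 := Nat.ModEq.add_left_cancel' j hmod
    have hlt1 := key i h1
    have : 3 * (i / 3) + uu n χ i j = i' := by
      rwa [Nat.ModEq, Nat.mod_eq_of_lt (by omega), Nat.mod_eq_of_lt (by omega)] at hmod2
    omega
  · exfalso
    rw [if_neg h1, if_pos h2] at h
    have hmod : (j + i) ≡ (j + (3 * (i' / 3) + uu n χ i' j)) [MOD n] := by
      have e2 : j + (3 * (i' / 3) + uu n χ i' j) = j + 3 * (i' / 3) + uu n χ i' j := by ring
      rw [e2]; rw [show j + i = i + j by ring]; exact h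
    have hmod2 := Nat.ModEq.add_left_cancel' j hmod
    have hlt2 := key i' h2
    have : i = 3 * (i' / 3) + uu n χ i' j := by
      rwa [Nat.ModEq, Nat.mod_eq_of_lt (by omega), Nat.mod_eq_of_lt (by omega)] at hmod2
    omega
  · rw [if_neg h1, if_neg h2] at h
    have hmod : (j + i) ≡ (j + i') [MOD n] := by
      rw [show j + i = i + j by ring, show j + i' = i' + j by ring]; exact h
    have := Nat.ModEq.add_left_cancel' j hmod
    rwa [Nat.ModEq, Nat.mod_eq_of_lt hi, Nat.mod_eq_of_lt hi'] at this

/-- the latin square as a function on `Fin n` -/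
def LF (n : ℕ) (χ : ℕ → ℕ → ℕ) (hn : 14 ≤ n) : Fin n → Fin n → Fin n :=
  fun i j => ⟨lf n χ i j, lf_lt χ (by omega) i j⟩

lemma LF_latin {n : ℕ} (χ : ℕ → ℕ → ℕ) (hn : 14 ≤ n) : IsLatinSquare (LF n χ hn) := by
  constructor
  · intro i
    rw [← Finite.injective_iff_bijective]
    intro j j' hjj
    have : lf n χ i j = lf n χ i j' := congrArg Fin.val hjj
    exact Fin.ext (row_inj χ hn i j j' j.isLt j'.isLt this)
  · intro j
    rw [← Finite.injective_iff_bijective]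
    intro i i' hii
    have : lf n χ i j = lf n χ i' j := congrArg Fin.val hii
    exact Fin.ext (col_inj χ hn j i i' i.isLt i'.isLt this)

end TF
namespace TF

/-- fiber sums over a 1-plex-like condition -/
lemma plex_sum {n : ℕ} {M : Type*} [AddCommMonoid M] (K : Finset (Fin n × Fin n))
    (g : Fin n × Fin n → Fin n) (hg : ∀ y, (K.filter fun p => g p = y).card = 1)
    (F : Fin n → M) : ∑ p ∈ K, F (g p) = ∑ y : Fin n, F y := by
  rw [← Finset.sum_fiberwise_of_maps_to (fun x _ => Finset.mem_univ (g x)) (fun p => F (g p))]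
  apply Finset.sum_congr rfl
  intro y _
  have : ∀ p ∈ K.filter fun p => g p = y, F (g p) = F y := by
    intro p hp
    rw [(Finset.mem_filter.mp hp).2]
  rw [Finset.sum_congr rfl this, Finset.sum_const, hg y, one_smul]

lemma card_val_lt {n m : ℕ} (hmn : m ≤ n) :
    (Finset.univ.filter fun i : Fin n => (i : ℕ) < m).card = m := by
  have hinj : Function.Injective (fun x : Fin m => (⟨(x : ℕ), lt_of_lt_of_le x.isLt hmn⟩ : Fin n)) := by
    intro a b hab
    exact Fin.ext (by simpa [Fin.ext_iff] using hab)
  have : (Finset.univ.filter fun i : Fin n => (i : ℕ) < m) =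
      Finset.image (fun x : Fin m => (⟨(x : ℕ), lt_of_lt_of_le x.isLt hmn⟩ : Fin n))
        Finset.univ := by
    ext i
    simp only [Finset.mem_filter, Finset.mem_univ, true_and, Finset.mem_image]
    constructor
    · intro hi
      exact ⟨⟨(i : ℕ), hi⟩, rfl⟩
    · rintro ⟨x, rfl⟩
      exact x.isLt
  rw [this, Finset.card_image_of_injective _ hinj, Finset.card_univ, Fintype.card_fin]

lemma LF_no_transversal {n : ℕ} (χ : ℕ → ℕ → ℕ) (hn : 14 ≤ n) (heven : Even n) :
    ¬ HasTransversal (LF n χ hn) := by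
  rintro ⟨K, hrow, hcol, hsym⟩
  haveI : NeZero n := ⟨by omega⟩
  obtain ⟨h, hh⟩ := heven
  set d : Fin n × Fin n → ℤ := fun p =>
    if (p.1 : ℕ) < kk n then
      ((3 * ((p.1 : ℕ) / 3) + uu n χ p.1 p.2 : ℕ) : ℤ) - ((p.1 : ℕ) : ℤ) else 0
    with hd
  -- pointwise congruence in ZMod n
  have claim1 : ∀ p : Fin n × Fin n,
      (((LF n χ hn p.1 p.2) : Fin n).val : ZMod n) =
        ((p.1.val : ZMod n) + p.2.val + (d p : ZMod n)) := by
    intro p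
    have hcast : ∀ a : ℕ, ((a % n : ℕ) : ZMod n) = (a : ZMod n) := by
      intro a
      conv_rhs => rw [← Nat.div_add_mod a n]
      push_cast
      simp [ZMod.natCast_self]
    show ((lf n χ p.1 p.2 : ℕ) : ZMod n) = _
    unfold lf
    simp only [hd]
    by_cases htop : (p.1 : ℕ) < kk n
    · rw [if_pos htop, if_pos htop, hcast]
      rw [Int.cast_sub, Int.cast_natCast, Int.cast_natCast]
      push_cast
      ring
    · rw [if_neg htop, if_neg htop, hcast]
      push_cast
      ring
  -- sum the congruence over K
  have hsum1 : ∑ p ∈ K, (((LF n χ hn p.1 p.2) : Fin n).val : ZMod n) =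
      ∑ y : Fin n, ((y : ℕ) : ZMod n) :=
    plex_sum K (fun p => LF n χ hn p.1 p.2) hsym (fun y => ((y : ℕ) : ZMod n))
  have hsum2 : ∑ p ∈ K, ((p.1.val : ZMod n)) = ∑ y : Fin n, ((y : ℕ) : ZMod n) :=
    plex_sum K Prod.fst hrow (fun y => ((y : ℕ) : ZMod n))
  have hsum3 : ∑ p ∈ K, ((p.2.val : ZMod n)) = ∑ y : Fin n, ((y : ℕ) : ZMod n) :=
    plex_sum K Prod.snd hcol (fun y => ((y : ℕ) : ZMod n))
  set T : ℤ := ∑ p ∈ K, d p with hT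
  have hsplit : ∑ p ∈ K, (((LF n χ hn p.1 p.2) : Fin n).val : ZMod n) =
      (∑ p ∈ K, ((p.1.val : ZMod n))) + (∑ p ∈ K, ((p.2.val : ZMod n))) + ((T : ℤ) : ZMod n) := by
    rw [Finset.sum_congr rfl (fun p _ => claim1 p)]
    rw [Finset.sum_add_distrib, Finset.sum_add_distrib]
    congr 1
    rw [hT]
    push_cast
    rfl
  -- hence T ≡ -G mod n
  set G : ℕ := ∑ i ∈ Finset.range n, i with hG
  have hGfin : ∑ y : Fin n, ((y : ℕ) : ZMod n) = ((G : ℕ) : ZMod n) := by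
    rw [hG]
    rw [← Fin.sum_univ_eq_sum_range (fun i => i) n]
    push_cast
    rfl
  have hzmod : ((T + G : ℤ) : ZMod n) = 0 := by
    rw [hGfin] at hsum1 hsum2 hsum3
    rw [hsum2, hsum3] at hsplit
    rw [hsum1] at hsplit
    have h0 : ((T : ℤ) : ZMod n) + ((G : ℕ) : ZMod n) = 0 := by
      linear_combination (-1 : ZMod n) * hsplit
    push_cast at h0 ⊢
    linear_combination h0
  have hdvd : (n : ℤ) ∣ (T + G) := by
    rwa [ZMod.intCast_zmod_eq_zero_iff_dvd] at hzmod
  -- bound on |T|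
  have hcardtop : (K.filter fun p => (p.1 : ℕ) < kk n).card = kk n := by
    rw [Finset.card_eq_sum_card_fiberwise
      (f := Prod.fst) (t := Finset.univ) (fun x _ => Finset.mem_univ x.1)]
    have hfib : ∀ i : Fin n,
        ((K.filter fun p => (p.1 : ℕ) < kk n).filter fun p => p.1 = i).card =
          if (i : ℕ) < kk n then 1 else 0 := by
      intro i
      rw [Finset.filter_filter]
      split
      · rename_i hik
        rw [Finset.filter_congr (fun p (_ : p ∈ K) =>
          show ((p.1 : ℕ) < kk n ∧ p.1 = i) ↔ (p.1 = i) from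
            ⟨And.right, fun hp => ⟨by rw [hp]; exact hik, hp⟩⟩)]
        exact hrow i
      · rename_i hik
        rw [Finset.card_eq_zero]
        apply Finset.filter_eq_empty_iff.mpr
        rintro p -
        rintro ⟨hlt, rfl⟩
        exact hik hlt
    rw [Finset.sum_congr rfl (fun i _ => hfib i)]
    rw [← Finset.card_filter]
    exact card_val_lt kk_le
  have habs : |T| ≤ 2 * kk n := by
    calc |T| ≤ ∑ p ∈ K, |d p| := Finset.abs_sum_le_sum_abs _ _
    _ ≤ ∑ p ∈ K, (if (p.1 : ℕ) < kk n then (2:ℤ) else 0) := by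
        apply Finset.sum_le_sum
        intro p _
        simp only [hd]
        by_cases hik : (p.1 : ℕ) < kk n
        · rw [if_pos hik, if_pos hik]
          have h1 := uu_le n χ p.1 p.2
          have h2 : 3 * ((p.1 : ℕ) / 3) ≤ (p.1 : ℕ) := Nat.mul_div_le _ 3
          have h3 : (p.1 : ℕ) ≤ 3 * ((p.1 : ℕ) / 3) + 2 := by omega
          rw [abs_le]
          constructor <;> (push_cast; omega)
        · rw [if_neg hik, if_neg hik]
          simp
    _ = 2 * (K.filter fun p => (p.1 : ℕ) < kk n).card := by
        rw [Finset.sum_ite, Finset.sum_const, Finset.sum_const]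
        simp [mul_comm]
    _ = 2 * kk n := by rw [hcardtop]
  -- final contradiction
  obtain ⟨c, hc⟩ := hdvd
  have hG2 : (G : ℤ) * 2 = (n : ℤ) * ((n : ℤ) - 1) := by
    have h2 := Finset.sum_range_id_mul_two n
    have h3 : (G * 2 : ℕ) = n * (n - 1) := by rw [hG]; exact h2
    have h4 := congrArg (fun x : ℕ => (x : ℤ)) h3
    push_cast [Nat.cast_sub (by omega : 1 ≤ n)] at h4
    exact h4
  have he : 2 * T = (n : ℤ) * (2 * c - ((n : ℤ) - 1)) := by
    linear_combination 2 * hc - hG2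
  set e : ℤ := 2 * c - ((n : ℤ) - 1) with hedef
  have hn2 : (n : ℤ) = 2 * (h : ℤ) := by
    have : (n : ℤ) = (h : ℤ) + (h : ℤ) := by exact_mod_cast congrArg (Nat.cast : ℕ → ℤ) hh
    omega
  have heodd : e % 2 ≠ 0 := by omega
  have hThe : T = (h : ℤ) * e := by
    have h5 : 2 * T = 2 * ((h : ℤ) * e) := by rw [he, hn2]; ring
    exact mul_left_cancel₀ (by norm_num : (2:ℤ) ≠ 0) h5
  have hene : e ≠ 0 := fun h0 => heodd (by rw [h0]; norm_num)
  have hhpos : (0 : ℤ) < (h : ℤ) := by omega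
  have hTlb : (h : ℤ) ≤ |T| := by
    rw [hThe, abs_mul, abs_of_nonneg (le_of_lt hhpos)]
    have h6 : 1 ≤ |e| := Int.one_le_abs hene
    nlinarith
  have hklt : 2 * kk n < h := by unfold kk; omega
  have : ((2 * kk n : ℕ) : ℤ) < (h : ℤ) := by exact_mod_cast hklt
  have habs2 : |T| ≤ ((2 * kk n : ℕ) : ℤ) := by push_cast; exact habs
  linarith

end TF
namespace TF

def RR (n : ℕ) : ℕ := n / 14
def QQ (n : ℕ) : ℕ := (n - mm n) / 3

def chnat {n : ℕ} (χ : Fin (RR n) → Fin (QQ n) → Fin 2) : ℕ → ℕ → ℕ :=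
  fun r t => if h : r < RR n ∧ t < QQ n then (χ ⟨r, h.1⟩ ⟨t, h.2⟩ : ℕ) else 0

lemma u3tab_inj00 : ∀ b < 2, ∀ b' < 2, u3tab b 0 0 = u3tab b' 0 0 → b = b' := by decide

lemma chnat_lt {n : ℕ} (χ : Fin (RR n) → Fin (QQ n) → Fin 2) (r t : ℕ) : chnat χ r t < 2 := by
  unfold chnat
  split
  · exact (χ _ _).isLt
  · norm_num

lemma Phi_inj {n : ℕ} (hn : 14 ≤ n) :
    Function.Injective (fun χ : Fin (RR n) → Fin (QQ n) → Fin 2 => LF n (chnat χ) hn) := by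
  intro χ χ' h
  funext r t
  have hmd : 3 ∣ (n - mm n) := by unfold mm; omega
  have hQQ : 3 * QQ n = n - mm n := by
    unfold QQ
    omega
  have hmmle : mm n ≤ 8 := by unfold mm; omega
  have hik : 3 * (r : ℕ) < kk n := by
    unfold kk
    have := r.isLt
    unfold RR at this
    omega
  have hikn : 3 * (r : ℕ) < n := lt_of_lt_of_le hik kk_le
  have hjn : mm n + 3 * (t : ℕ) < n := by
    have := t.isLt
    unfold QQ at this
    omega
  set i : Fin n := ⟨3 * (r : ℕ), hikn⟩
  set j : Fin n := ⟨mm n + 3 * (t : ℕ), hjn⟩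
  have heq : lf n (chnat χ) i j = lf n (chnat χ') i j := by
    have := congrFun (congrFun h i) j
    exact congrArg Fin.val this
  unfold lf at heq
  rw [if_pos (show (i : ℕ) < kk n from hik), if_pos (show (i : ℕ) < kk n from hik)] at heq
  have hnotm : ¬ ((j : ℕ) < mm n) := by
    show ¬ (mm n + 3 * (t : ℕ) < mm n); omega
  unfold uu at heq
  rw [if_neg hnotm, if_neg hnotm] at heq
  have e1 : ((j : ℕ) - mm n) / 3 = (t : ℕ) := by
    show (mm n + 3 * (t : ℕ) - mm n) / 3 = (t : ℕ); omega
  have e2 : ((j : ℕ) - mm n) % 3 = 0 := by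
    show (mm n + 3 * (t : ℕ) - mm n) % 3 = 0; omega
  have e3 : (i : ℕ) / 3 = (r : ℕ) := by
    show (3 * (r : ℕ)) / 3 = (r : ℕ); omega
  have e4 : (i : ℕ) % 3 = 0 := by
    show (3 * (r : ℕ)) % 3 = 0; omega
  rw [e1, e2, e3, e4] at heq
  have hb : chnat χ (r : ℕ) (t : ℕ) = ((χ r t) : ℕ) := by
    unfold chnat
    rw [dif_pos ⟨r.isLt, t.isLt⟩]
  have hb' : chnat χ' (r : ℕ) (t : ℕ) = ((χ' r t) : ℕ) := by
    unfold chnat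
    rw [dif_pos ⟨r.isLt, t.isLt⟩]
  rw [hb, hb'] at heq
  rw [Nat.mod_eq_of_lt (χ r t).isLt, Nat.mod_eq_of_lt (χ' r t).isLt] at heq
  -- cancel the common prefix mod n
  have hu : u3tab ((χ r t) : ℕ) 0 0 = u3tab ((χ' r t) : ℕ) 0 0 := by
    have hle : ∀ b < 2, u3tab b 0 0 ≤ 2 := by decide
    have h1 := hle _ (χ r t).isLt
    have h2 := hle _ (χ' r t).isLt
    have hmod : ((j : ℕ) + 3 * (r : ℕ) + u3tab ((χ r t) : ℕ) 0 0) ≡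
        ((j : ℕ) + 3 * (r : ℕ) + u3tab ((χ' r t) : ℕ) 0 0) [MOD n] := heq
    have hcan : u3tab ((χ r t) : ℕ) 0 0 ≡ u3tab ((χ' r t) : ℕ) 0 0 [MOD n] :=
      Nat.ModEq.add_left_cancel' ((j : ℕ) + 3 * (r : ℕ)) hmod
    rwa [Nat.ModEq, Nat.mod_eq_of_lt (by omega : u3tab ((χ r t) : ℕ) 0 0 < n),
      Nat.mod_eq_of_lt (by omega : u3tab ((χ' r t) : ℕ) 0 0 < n)] at hcan
  exact Fin.ext (u3tab_inj00 _ (χ r t).isLt _ (χ' r t).isLt hu)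

lemma card_lb {n : ℕ} (hn : 14 ≤ n) (heven : Even n) :
    2 ^ (QQ n * RR n) ≤
      Nat.card {L : Fin n → Fin n → Fin n // IsLatinSquare L ∧ ¬ HasTransversal L} := by
  have hinj : Function.Injective
      (fun χ : Fin (RR n) → Fin (QQ n) → Fin 2 =>
        (⟨LF n (chnat χ) hn, LF_latin (chnat χ) hn, LF_no_transversal (chnat χ) hn heven⟩ :
          {L : Fin n → Fin n → Fin n // IsLatinSquare L ∧ ¬ HasTransversal L})) := by
    intro χ χ' h
    exact Phi_inj hn (congrArg Subtype.val h)
  have := Nat.card_le_card_of_injective _ hinj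
  calc 2 ^ (QQ n * RR n) = Nat.card (Fin (RR n) → Fin (QQ n) → Fin 2) := by
        rw [Nat.card_eq_fintype_card]
        simp [Fintype.card_fun]
        rw [← pow_mul]
  _ ≤ _ := this

end TF
namespace TF

lemma species_refl {n : ℕ} (L : Fin n → Fin n → Fin n) : SameSpecies L L := by
  refine ⟨1, fun _ => 1, fun v => ?_⟩
  simp [triples]

lemma species_symm {n : ℕ} {L₁ L₂ : Fin n → Fin n → Fin n} (h : SameSpecies L₁ L₂) :
    SameSpecies L₂ L₁ := by
  obtain ⟨σ, f, hf⟩ := h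
  refine ⟨σ⁻¹, fun i => (f (σ⁻¹ i))⁻¹, fun v => ?_⟩
  have h2 := hf (fun i => (f (σ⁻¹ i))⁻¹ (v (σ⁻¹ i)))
  have h3 : (fun i => f i ((f (σ⁻¹ (σ i)))⁻¹ (v (σ⁻¹ (σ i))))) = v := by
    funext i
    simp
  constructor
  · intro hv
    apply h2.mpr
    show (fun i => f i ((f (σ⁻¹ (σ i)))⁻¹ (v (σ⁻¹ (σ i))))) ∈ triples L₂
    rw [h3]
    exact hv
  · intro hψ
    have := h2.mp hψ
    rwa [show (fun i => f i ((fun i => (f (σ⁻¹ i))⁻¹ (v (σ⁻¹ i))) (σ i))) =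
      (fun i => f i ((f (σ⁻¹ (σ i)))⁻¹ (v (σ⁻¹ (σ i))))) from rfl, h3] at this

lemma species_trans {n : ℕ} {L₁ L₂ L₃ : Fin n → Fin n → Fin n}
    (h : SameSpecies L₁ L₂) (h' : SameSpecies L₂ L₃) : SameSpecies L₁ L₃ := by
  obtain ⟨σ₁, f₁, hf₁⟩ := h
  obtain ⟨σ₂, f₂, hf₂⟩ := h'
  refine ⟨σ₂.trans σ₁, fun i => f₂ i * f₁ (σ₂ i), fun v => ?_⟩
  have h1 := hf₁ v
  have h2 := hf₂ (fun i => f₁ i (v (σ₁ i)))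
  rw [h1, h2]
  rfl

lemma triples_determine {n : ℕ} {L₁ L₂ : Fin n → Fin n → Fin n}
    (h : ∀ w, w ∈ triples L₁ ↔ w ∈ triples L₂) : L₁ = L₂ := by
  funext i j
  have h1 : (![i, j, L₁ i j]) ∈ triples L₁ := by simp [triples]
  have h2 := (h _).mp h1
  simp [triples] at h2
  exact h2.symm

/-- From a witness of SameSpecies, the second square is determined by the first. -/
lemma species_determined {n : ℕ} {Z L₁ L₂ : Fin n → Fin n → Fin n}
    (σ : Equiv.Perm (Fin 3)) (f : Fin 3 → Equiv.Perm (Fin n))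
    (h1 : ∀ v : Fin 3 → Fin n, v ∈ triples Z ↔ (fun i => f i (v (σ i))) ∈ triples L₁)
    (h2 : ∀ v : Fin 3 → Fin n, v ∈ triples Z ↔ (fun i => f i (v (σ i))) ∈ triples L₂) :
    L₁ = L₂ := by
  apply triples_determine
  intro w
  set ψ : Fin 3 → Fin n := fun i => (f (σ⁻¹ i))⁻¹ (w (σ⁻¹ i)) with hψ
  have hφψ : (fun i => f i (ψ (σ i))) = w := by
    funext i
    simp [hψ]
  rw [← hφψ]
  exact (h1 ψ).symm.trans (h2 ψ)

end TF
namespace TF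

variable {n : ℕ}

abbrev ST (n : ℕ) := {L : Fin n → Fin n → Fin n // IsLatinSquare L ∧ ¬ HasTransversal L}

abbrev srel (n : ℕ) : ST n → ST n → Prop := fun L₁ L₂ => SameSpecies L₁.1 L₂.1

lemma srel_equiv : Equivalence (srel n) :=
  ⟨fun x => species_refl x.1, fun h => species_symm h, fun h h' => species_trans h h'⟩

lemma quot_bound (n : ℕ) :
    Nat.card (ST n) ≤ Nat.card (Quot (srel n)) * (6 * (n.factorial) ^ 3) := by
  classical
  set P := Equiv.Perm (Fin 3) × (Fin 3 → Equiv.Perm (Fin n)) with hP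
  have hwitness : ∀ x : ST n, SameSpecies ((Quot.mk (srel n) x).out).1 x.1 := by
    intro x
    have h1 : Quot.mk (srel n) ((Quot.mk (srel n) x).out) = Quot.mk (srel n) x :=
      Quot.out_eq _
    have h2 := Quot.eq.mp h1
    exact (srel_equiv.eqvGen_iff).mp h2
  set F : ST n → Quot (srel n) × P := fun x =>
    (Quot.mk (srel n) x,
      (Classical.choose (hwitness x), Classical.choose (Classical.choose_spec (hwitness x))))
    with hF
  have hFinj : Function.Injective F := by
    intro x y hxy
    have hq : Quot.mk (srel n) x = Quot.mk (srel n) y := congrArg Prod.fst hxy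
    have hσ := congrArg (fun z => z.2.1) hxy
    have hf := congrArg (fun z => z.2.2) hxy
    simp only [hF] at hσ hf
    have hx := Classical.choose_spec (Classical.choose_spec (hwitness x))
    have hy := Classical.choose_spec (Classical.choose_spec (hwitness y))
    have hz : (Quot.mk (srel n) x).out = (Quot.mk (srel n) y).out := by rw [hq]
    have main : ∀ (zx zy : ST n) (σ σ' : Equiv.Perm (Fin 3))
        (f f' : Fin 3 → Equiv.Perm (Fin n)), zx = zy → σ = σ' → f = f' →
        (∀ v : Fin 3 → Fin n, v ∈ triples zx.1 ↔ (fun i => f i (v (σ i))) ∈ triples x.1) →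
        (∀ v : Fin 3 → Fin n, v ∈ triples zy.1 ↔ (fun i => f' i (v (σ' i))) ∈ triples y.1) →
        x.1 = y.1 := by
      intro zx zy σ σ' f f' hz' hσ' hf' hx' hy'
      subst hz'; subst hσ'; subst hf'
      exact species_determined σ f hx' hy'
    exact Subtype.ext (main _ _ _ _ _ _ hz hσ hf hx hy)
  have hcard := Nat.card_le_card_of_injective F hFinj
  have hcardP : Nat.card P = 6 * (n.factorial) ^ 3 := by
    rw [hP, Nat.card_prod]
    congr 1
    · rw [Nat.card_eq_fintype_card, Fintype.card_perm, Fintype.card_fin]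
      rfl
    · rw [Nat.card_eq_fintype_card, Fintype.card_fun, Fintype.card_perm, Fintype.card_fin,
        Fintype.card_fin]
  calc Nat.card (ST n) ≤ Nat.card (Quot (srel n) × P) := hcard
  _ = Nat.card (Quot (srel n)) * Nat.card P := Nat.card_prod _ _
  _ = Nat.card (Quot (srel n)) * (6 * (n.factorial) ^ 3) := by rw [hcardP]

end TF
namespace TF

lemma nat_count_bound {n : ℕ} (hn : 14 ≤ n) :
    (n - 8) * (n - 13) ≤ 42 * (QQ n * RR n) := by
  have h1 : n - 8 ≤ 3 * QQ n := by unfold QQ mm; omega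
  have h2 : n - 13 ≤ 14 * RR n := by unfold RR; omega
  calc (n - 8) * (n - 13) ≤ (3 * QQ n) * (14 * RR n) := Nat.mul_le_mul h1 h2
  _ = 42 * (QQ n * RR n) := by ring

open Filter Real in
/-- the eventual exponent inequality -/
lemma exponent_ev : ∀ᶠ n : ℕ in Filter.atTop,
    (1/2 : ℝ) * (n:ℝ) ^ ((3:ℝ)/2) * Real.log n + Real.log 6 + 3 * (n:ℝ) * Real.log n ≤
      (((n:ℝ) - 8) * ((n:ℝ) - 13) / 42) * Real.log 2 := by
  have hc : (0:ℝ) < Real.log 2 / 3000 := by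
    have := Real.log_pos (by norm_num : (1:ℝ) < 2)
    positivity
  have h1 : ∀ᶠ (x:ℝ) in atTop, ‖Real.log x‖ ≤ (Real.log 2 / 3000) * ‖x ^ ((1:ℝ)/2)‖ :=
    (isLittleO_log_rpow_atTop (by norm_num : (0:ℝ) < 1/2)).def hc
  have h2 : ∀ᶠ (n : ℕ) in atTop,
      ‖Real.log (n:ℝ)‖ ≤ (Real.log 2 / 3000) * ‖(n:ℝ) ^ ((1:ℝ)/2)‖ :=
    tendsto_natCast_atTop_atTop.eventually h1
  filter_upwards [h2, Filter.eventually_ge_atTop 50] with n hlog hn50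
  have hn1 : (1:ℝ) ≤ (n:ℝ) := by exact_mod_cast (by omega : 1 ≤ n)
  have hnpos : (0:ℝ) < (n:ℝ) := by linarith
  have hlogn0 : 0 ≤ Real.log n := Real.log_nonneg hn1
  have hrpos : (0:ℝ) ≤ (n:ℝ) ^ ((1:ℝ)/2) := Real.rpow_nonneg (le_of_lt hnpos) _
  have hlog' : Real.log n ≤ (Real.log 2 / 3000) * (n:ℝ) ^ ((1:ℝ)/2) := by
    rw [Real.norm_eq_abs, Real.norm_eq_abs, abs_of_nonneg hlogn0, abs_of_nonneg hrpos] at hlog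
    exact hlog
  set A : ℝ := (n:ℝ) ^ ((3:ℝ)/2) with hA
  have hApos : (0:ℝ) ≤ A := Real.rpow_nonneg (le_of_lt hnpos) _
  have hA100 : (100:ℝ) ≤ A := by
    have h50 : (50:ℝ) ≤ (n:ℝ) := by exact_mod_cast hn50
    have : (50:ℝ) ^ ((3:ℝ)/2) ≤ A := by
      rw [hA]
      exact Real.rpow_le_rpow (by norm_num) h50 (by norm_num)
    have h50b : (100:ℝ) ≤ (50:ℝ) ^ ((3:ℝ)/2) := by
      have : ((50:ℝ) ^ (3:ℕ)) ^ ((1:ℝ)/2) = (50:ℝ) ^ ((3:ℝ)/2) := by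
        rw [← Real.rpow_natCast (50:ℝ) 3, ← Real.rpow_mul (by norm_num)]
        norm_num
      rw [← this]
      have : (100:ℝ) = ((100:ℝ)^(2:ℕ)) ^ ((1:ℝ)/2) := by
        rw [show ((1:ℝ)/2) = ((2:ℕ):ℝ)⁻¹ by norm_num]
        rw [Real.pow_rpow_inv_natCast (by norm_num) (by norm_num)]
      rw [this]
      apply Real.rpow_le_rpow (by positivity) (by norm_num) (by norm_num)
    linarith
  have hnA : (n:ℝ) ≤ A := by
    calc (n:ℝ) = (n:ℝ) ^ ((1:ℝ)) := (Real.rpow_one _).symm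
    _ ≤ A := Real.rpow_le_rpow_of_exponent_le hn1 (by norm_num)
  have hlogn1 : 1 ≤ Real.log n := by
    rw [Real.le_log_iff_exp_le hnpos]
    have := Real.exp_one_lt_d9
    have h50 : (50:ℝ) ≤ (n:ℝ) := by exact_mod_cast hn50
    linarith
  have hlog6 : Real.log 6 ≤ 5 := by
    have := Real.log_le_sub_one_of_pos (by norm_num : (0:ℝ) < 6)
    linarith
  -- combine
  have hmain : (1/2 : ℝ) * A * Real.log n + Real.log 6 + 3 * (n:ℝ) * Real.log n ≤
      4 * A * Real.log n := by
    have e1 : 3 * (n:ℝ) * Real.log n ≤ 3 * A * Real.log n := by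
      apply mul_le_mul_of_nonneg_right _ hlogn0
      linarith
    have e2 : Real.log 6 ≤ (1/2 : ℝ) * A * Real.log n := by
      calc Real.log 6 ≤ 5 := hlog6
      _ ≤ (1/2) * 100 * 1 := by norm_num
      _ ≤ (1/2) * A * Real.log n := by
          apply mul_le_mul (by nlinarith) hlogn1 (by norm_num) (by positivity)
    nlinarith
  have hsq : A * ((n:ℝ) ^ ((1:ℝ)/2)) = (n:ℝ) ^ (2:ℕ) := by
    rw [hA, ← Real.rpow_add hnpos,
      show (3:ℝ)/2 + 1/2 = ((2:ℕ):ℝ) by norm_num, Real.rpow_natCast]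
  have hstep : 4 * A * Real.log n ≤ (4 * Real.log 2 / 3000) * (n:ℝ)^(2:ℕ) := by
    calc 4 * A * Real.log n ≤ 4 * A * ((Real.log 2 / 3000) * (n:ℝ) ^ ((1:ℝ)/2)) := by
          apply mul_le_mul_of_nonneg_left hlog' (by positivity)
    _ = (4 * Real.log 2 / 3000) * (A * (n:ℝ) ^ ((1:ℝ)/2)) := by ring
    _ = (4 * Real.log 2 / 3000) * (n:ℝ)^(2:ℕ) := by rw [hsq]
  have hrhs : (4 * Real.log 2 / 3000) * (n:ℝ)^(2:ℕ) ≤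
      (((n:ℝ) - 8) * ((n:ℝ) - 13) / 42) * Real.log 2 := by
    have hlog2pos : (0:ℝ) < Real.log 2 := Real.log_pos (by norm_num)
    have h50 : (50:ℝ) ≤ (n:ℝ) := by exact_mod_cast hn50
    have hq : ((n:ℝ))^(2:ℕ) / 2 ≤ ((n:ℝ) - 8) * ((n:ℝ) - 13) := by nlinarith
    nlinarith [sq_nonneg ((n:ℝ))]
  linarith

end TF
namespace TF

open Filter Real in
lemma master_ev : ∀ᶠ n : ℕ in Filter.atTop,
    ((n:ℝ) ^ ((1/2 : ℝ) * (n:ℝ) ^ ((3:ℝ)/2))) * (6 * ((n.factorial : ℕ) : ℝ) ^ 3) ≤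
      (2:ℝ) ^ (QQ n * RR n) := by
  filter_upwards [exponent_ev, Filter.eventually_ge_atTop 50] with n hev hn50
  have hn14 : 14 ≤ n := by omega
  have hnpos : (0:ℝ) < (n:ℝ) := by
    have : (0:ℕ) < n := by omega
    exact_mod_cast this
  have hfacpos : (0:ℝ) < ((n.factorial : ℕ) : ℝ) := by
    exact_mod_cast n.factorial_pos
  have hBpos : (0:ℝ) < 6 * ((n.factorial : ℕ) : ℝ) ^ 3 := by positivity
  -- rewrite both sides as exponentials
  have hL : ((n:ℝ) ^ ((1/2 : ℝ) * (n:ℝ) ^ ((3:ℝ)/2))) * (6 * ((n.factorial : ℕ) : ℝ) ^ 3) =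
      Real.exp ((1/2 : ℝ) * (n:ℝ) ^ ((3:ℝ)/2) * Real.log n +
        Real.log (6 * ((n.factorial : ℕ) : ℝ) ^ 3)) := by
    rw [Real.exp_add, Real.exp_log hBpos, Real.rpow_def_of_pos hnpos]
    ring_nf
  have hR : (2:ℝ) ^ (QQ n * RR n) = Real.exp ((QQ n * RR n : ℕ) * Real.log 2) := by
    rw [← Real.rpow_natCast (2:ℝ) (QQ n * RR n), Real.rpow_def_of_pos (by norm_num)]
    ring_nf
  rw [hL, hR]
  apply Real.exp_le_exp.mpr
  -- bound log of the factor
  have hlogB : Real.log (6 * ((n.factorial : ℕ) : ℝ) ^ 3) ≤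
      Real.log 6 + 3 * (n:ℝ) * Real.log n := by
    rw [Real.log_mul (by norm_num) (by positivity), Real.log_pow]
    have h1 : Real.log ((n.factorial : ℕ) : ℝ) ≤ (n:ℝ) * Real.log n := by
      have h2 : ((n.factorial : ℕ) : ℝ) ≤ ((n:ℝ)) ^ (n:ℕ) := by
        have := n.factorial_le_pow
        exact_mod_cast this
      calc Real.log ((n.factorial : ℕ) : ℝ) ≤ Real.log ((n:ℝ) ^ (n:ℕ)) :=
            Real.log_le_log hfacpos h2
      _ = (n:ℝ) * Real.log n := by rw [Real.log_pow]
    push_cast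
    linarith
  have hEcast : (((n:ℝ) - 8) * ((n:ℝ) - 13) / 42) * Real.log 2 ≤
      ((QQ n * RR n : ℕ) : ℝ) * Real.log 2 := by
    apply mul_le_mul_of_nonneg_right _ (le_of_lt (Real.log_pos (by norm_num)))
    have h3 := nat_count_bound hn14
    have h4 : (((n - 8) * (n - 13) : ℕ) : ℝ) ≤ ((42 * (QQ n * RR n) : ℕ) : ℝ) := by
      exact_mod_cast h3
    rw [Nat.cast_mul, Nat.cast_sub (by omega : 8 ≤ n), Nat.cast_sub (by omega : 13 ≤ n)] at h4
    push_cast at h4 ⊢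
    linarith
  linarith [hev]

end TF

theorem stmt18 :
    ∀ ε : ℝ, 0 < ε → ∃ N : ℕ, ∀ n : ℕ, Even n → N ≤ n →
      (n : ℝ) ^ ((1 / 2 - ε) * (n : ℝ) ^ ((3 : ℝ) / 2)) ≤
        (Nat.card {L : Fin n → Fin n → Fin n //
          IsLatinSquare L ∧ ¬ HasTransversal L} : ℝ) ∧
      (n : ℝ) ^ ((1 / 2 - ε) * (n : ℝ) ^ ((3 : ℝ) / 2)) ≤
        (Nat.card (Quot (fun L₁ L₂ : {L : Fin n → Fin n → Fin n //
          IsLatinSquare L ∧ ¬ HasTransversal L} => SameSpecies L₁.1 L₂.1)) : ℝ) := by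
  intro ε hε
  obtain ⟨N₀, hN₀⟩ := Filter.eventually_atTop.mp TF.master_ev
  refine ⟨max N₀ 50, fun n heven hNn => ?_⟩
  have hn50 : 50 ≤ n := le_trans (le_max_right _ _) hNn
  have hn14 : 14 ≤ n := by omega
  have hmaster := hN₀ n (le_trans (le_max_left _ _) hNn)
  have hn1 : (1:ℝ) ≤ (n:ℝ) := by exact_mod_cast (by omega : 1 ≤ n)
  set A : ℝ := (n:ℝ) ^ ((3:ℝ)/2) with hA
  have hApos : (0:ℝ) ≤ A := Real.rpow_nonneg (by linarith) _
  set X : ℝ := (n : ℝ) ^ ((1 / 2 - ε) * A) with hX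
  set Y : ℝ := (n : ℝ) ^ ((1/2 : ℝ) * A) with hY
  have hXY : X ≤ Y := by
    rw [hX, hY]
    apply Real.rpow_le_rpow_of_exponent_le hn1
    have : (1/2 - ε : ℝ) ≤ 1/2 := by linarith
    exact mul_le_mul_of_nonneg_right this hApos
  have hYpos : (0:ℝ) ≤ Y := Real.rpow_nonneg (by linarith) _
  set B : ℕ := 6 * (n.factorial) ^ 3 with hB
  have hBcast : ((B : ℕ) : ℝ) = 6 * ((n.factorial : ℕ) : ℝ) ^ 3 := by
    rw [hB]; push_cast; ring
  have hB1 : (1 : ℕ) ≤ B := by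
    have := n.factorial_pos
    have : 1 ≤ (n.factorial) ^ 3 := Nat.one_le_pow _ _ this
    omega
  have hB1R : (1:ℝ) ≤ (B : ℝ) := by exact_mod_cast hB1
  have hBposR : (0:ℝ) < (B : ℝ) := by linarith
  set E : ℕ := TF.QQ n * TF.RR n with hE
  have hmaster' : Y * (B : ℝ) ≤ (2:ℝ) ^ E := by
    rw [hBcast, hY]
    exact hmaster
  have hcardlb := TF.card_lb hn14 heven
  have hcardlbR : ((2:ℝ)) ^ E ≤
      (Nat.card {L : Fin n → Fin n → Fin n // IsLatinSquare L ∧ ¬ HasTransversal L} : ℝ) := by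
    calc ((2:ℝ)) ^ E = (((2 ^ E : ℕ) : ℕ) : ℝ) := by push_cast; ring
    _ ≤ _ := by exact_mod_cast hcardlb
  have hquot := TF.quot_bound n
  constructor
  · calc X ≤ Y := hXY
    _ = Y * 1 := by ring
    _ ≤ Y * (B : ℝ) := by
        apply mul_le_mul_of_nonneg_left hB1R hYpos
    _ ≤ (2:ℝ) ^ E := hmaster'
    _ ≤ _ := hcardlbR
  · have hquotR : (Nat.card (TF.ST n) : ℝ) ≤
        (Nat.card (Quot (TF.srel n)) : ℝ) * (B : ℝ) := by
      have : ((Nat.card (TF.ST n) : ℕ) : ℝ) ≤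
          ((Nat.card (Quot (TF.srel n)) * B : ℕ) : ℝ) := by exact_mod_cast hquot
      push_cast at this
      linarith
    have hXB : X * (B:ℝ) ≤ (Nat.card (Quot (TF.srel n)) : ℝ) * (B : ℝ) := by
      calc X * (B:ℝ) ≤ Y * (B:ℝ) := mul_le_mul_of_nonneg_right hXY (by linarith)
      _ ≤ (2:ℝ) ^ E := hmaster'
      _ ≤ (Nat.card (TF.ST n) : ℝ) := hcardlbR
      _ ≤ _ := hquotR
    exact le_of_mul_le_mul_right hXB hBposR
end

section
/- Let n be even and L a latin square of order n that differs from B_n only in rows 0 and n/4 (where 4 | n), such that every entry (r,c,s) of L satisfies: Δ_1(r,c,s) = 0 if r ∉ {0, n/4}, Δ_1(r,c,s) ∈ {0, n/4} if r = 0, and Δ_1(r,c,s) ∈ {0, −n/4} if r = n/4, where Δ_1(r,c,s) is the least-absolute-value residue of s−r−c modulo n. Then L has no transversal. -/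
open scoped Classical

lemma bmod_zero_of_dvd {x : ℤ} {n : ℕ} (hn : 0 < n) (h : (n : ℤ) ∣ x) :
    Int.bmod x n = 0 := by
  obtain ⟨c, rfl⟩ := h
  rw [Int.bmod]
  simp only [Int.mul_emod_right]
  rw [if_pos]
  omega

theorem stmt19 (n : ℕ) (hpos : 0 < n) (hn : Even n) (h4 : 4 ∣ n)
    (L : Fin n → Fin n → Fin n) (hL : IsLatinSquare L)
    (hrows : ∀ i j : Fin n, (i : ℕ) ≠ 0 → (i : ℕ) ≠ n / 4 → L i j = i + j)
    (h0 : ∀ i j : Fin n, (i : ℕ) = 0 →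
      Int.bmod (((L i j : ℕ) : ℤ) - ((i : ℕ) : ℤ) - ((j : ℕ) : ℤ)) n
        ∈ ({0, ((n / 4 : ℕ) : ℤ)} : Set ℤ))
    (hq : ∀ i j : Fin n, (i : ℕ) = n / 4 →
      Int.bmod (((L i j : ℕ) : ℤ) - ((i : ℕ) : ℤ) - ((j : ℕ) : ℤ)) n
        ∈ ({0, -((n / 4 : ℕ) : ℤ)} : Set ℤ)) :
    ¬ HasTransversal L := by
  rintro ⟨K, hK1, hK2, hK3⟩
  have hm1 : 1 ≤ n / 4 := (Nat.one_le_div_iff (by norm_num)).mpr (Nat.le_of_dvd hpos h4)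
  have hmn : n / 4 < n := Nat.div_lt_self hpos (by norm_num)
  set D : Fin n × Fin n → ℤ := fun p =>
    Int.bmod (((L p.1 p.2 : ℕ) : ℤ) - ((p.1 : ℕ) : ℤ) - ((p.2 : ℕ) : ℤ)) n with hD
  set T : ℤ := ∑ s : Fin n, ((s : ℕ) : ℤ) with hT
  -- sum of symbols over K
  have hsym : ∑ p ∈ K, ((L p.1 p.2 : ℕ) : ℤ) = T := by
    rw [← Finset.sum_fiberwise K (fun p => L p.1 p.2) (fun p => ((L p.1 p.2 : ℕ) : ℤ))]
    refine Finset.sum_congr rfl fun s _ => ?_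
    calc ∑ p ∈ K.filter (fun p => L p.1 p.2 = s), ((L p.1 p.2 : ℕ) : ℤ)
        = ∑ p ∈ K.filter (fun p => L p.1 p.2 = s), ((s : ℕ) : ℤ) :=
          Finset.sum_congr rfl fun p hp => by rw [(Finset.mem_filter.mp hp).2]
      _ = _ := by rw [Finset.sum_const, hK3 s, one_smul]
  have hrow : ∑ p ∈ K, ((p.1 : ℕ) : ℤ) = T := by
    rw [← Finset.sum_fiberwise K (fun p => p.1) (fun p => ((p.1 : ℕ) : ℤ))]
    refine Finset.sum_congr rfl fun s _ => ?_
    calc ∑ p ∈ K.filter (fun p => p.1 = s), ((p.1 : ℕ) : ℤ)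
        = ∑ p ∈ K.filter (fun p => p.1 = s), ((s : ℕ) : ℤ) :=
          Finset.sum_congr rfl fun p hp => by rw [(Finset.mem_filter.mp hp).2]
      _ = _ := by rw [Finset.sum_const, hK1 s, one_smul]
  have hcol : ∑ p ∈ K, ((p.2 : ℕ) : ℤ) = T := by
    rw [← Finset.sum_fiberwise K (fun p => p.2) (fun p => ((p.2 : ℕ) : ℤ))]
    refine Finset.sum_congr rfl fun s _ => ?_
    calc ∑ p ∈ K.filter (fun p => p.2 = s), ((p.2 : ℕ) : ℤ)
        = ∑ p ∈ K.filter (fun p => p.2 = s), ((s : ℕ) : ℤ) :=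
          Finset.sum_congr rfl fun p hp => by rw [(Finset.mem_filter.mp hp).2]
      _ = _ := by rw [Finset.sum_const, hK2 s, one_smul]
  have harg : ∑ p ∈ K, (((L p.1 p.2 : ℕ) : ℤ) - ((p.1 : ℕ) : ℤ) - ((p.2 : ℕ) : ℤ)) = -T := by
    rw [Finset.sum_sub_distrib, Finset.sum_sub_distrib, hsym, hrow, hcol]; ring
  -- sum of D is congruent to -T mod n
  have hmod : (n : ℤ) ∣ (∑ p ∈ K, D p) + T := by
    have h1 : (∑ p ∈ K, D p) % n
        = (∑ p ∈ K, (((L p.1 p.2 : ℕ) : ℤ) - ((p.1 : ℕ) : ℤ) - ((p.2 : ℕ) : ℤ))) % n := by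
      rw [Finset.sum_int_mod,
        Finset.sum_int_mod K n (fun p => ((L p.1 p.2 : ℕ) : ℤ) - ((p.1 : ℕ) : ℤ) - ((p.2 : ℕ) : ℤ))]
      congr 1
      exact Finset.sum_congr rfl fun p _ => Int.bmod_emod
    rw [harg] at h1
    have : ((∑ p ∈ K, D p) - (-T)) % n = 0 := by
      rw [Int.sub_emod, h1, sub_self, Int.zero_emod]
    have := Int.dvd_of_emod_eq_zero this
    simpa [sub_neg_eq_add] using this
  -- the two special rows
  set i0 : Fin n := ⟨0, hpos⟩ with hi0
  set i1 : Fin n := ⟨n / 4, hmn⟩ with hi1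
  have hne : i0 ≠ i1 := by
    intro h
    have := congrArg Fin.val h
    simp [hi0, hi1] at this
    omega
  have hsplit : ∑ p ∈ K, D p
      = (∑ p ∈ K.filter (fun p => p.1 = i0), D p) + ∑ p ∈ K.filter (fun p => p.1 = i1), D p := by
    rw [← Finset.sum_fiberwise K (fun p => p.1) D]
    refine Finset.sum_eq_add i0 i1 hne (fun c _ hc => ?_) (by simp) (by simp)
    refine Finset.sum_eq_zero fun p hp => ?_
    obtain ⟨hpK, hp1⟩ := Finset.mem_filter.mp hp
    have hc0 : (c : ℕ) ≠ 0 := fun h => hc.1 (by apply Fin.ext; simpa [hi0] using h)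
    have hc1 : (c : ℕ) ≠ n / 4 := fun h => hc.2 (by apply Fin.ext; simpa [hi1] using h)
    have := hrows p.1 p.2 (hp1 ▸ hc0) (hp1 ▸ hc1)
    rw [hD]
    simp only
    rw [this]
    apply bmod_zero_of_dvd hpos
    have : ((p.1 + p.2 : Fin n) : ℕ) = ((p.1 : ℕ) + (p.2 : ℕ)) % n := Fin.add_def p.1 p.2 ▸ rfl
    rw [this]
    push_cast
    set a := ((p.1 : ℕ) : ℤ) with ha
    set b := ((p.2 : ℕ) : ℤ) with hb
    have hdvd2 : (n : ℤ) ∣ (a + b) - (a + b) % (n : ℤ) :=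
      Int.ModEq.dvd (Int.emod_emod_of_dvd (a + b) dvd_rfl :
        Int.ModEq (n : ℤ) ((a + b) % (n : ℤ)) (a + b))
    have heq : (a + b) % (n : ℤ) - a - b = -((a + b) - (a + b) % (n : ℤ)) := by ring
    rw [heq]
    exact dvd_neg.mpr hdvd2
  obtain ⟨p0, hp0⟩ := Finset.card_eq_one.mp (hK1 i0)
  obtain ⟨p1, hp1⟩ := Finset.card_eq_one.mp (hK1 i1)
  have hp0mem : p0 ∈ K.filter (fun p => p.1 = i0) := hp0 ▸ Finset.mem_singleton_self p0
  have hp1mem : p1 ∈ K.filter (fun p => p.1 = i1) := hp1 ▸ Finset.mem_singleton_self p1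
  have hp0v : (p0.1 : ℕ) = 0 := by rw [(Finset.mem_filter.mp hp0mem).2]
  have hp1v : (p1.1 : ℕ) = n / 4 := by rw [(Finset.mem_filter.mp hp1mem).2]
  have hd0 : D p0 ∈ ({0, ((n / 4 : ℕ) : ℤ)} : Set ℤ) := h0 p0.1 p0.2 hp0v
  have hd1 : D p1 ∈ ({0, -((n / 4 : ℕ) : ℤ)} : Set ℤ) := hq p1.1 p1.2 hp1v
  rw [hsplit, hp0, hp1, Finset.sum_singleton, Finset.sum_singleton] at hmod
  -- arithmetic contradiction
  set M : ℤ := ((n / 4 : ℕ) : ℤ) with hM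
  have hM1 : 1 ≤ M := by rw [hM]; exact_mod_cast hm1
  have hnM : (n : ℤ) = 4 * M := by
    rw [hM]
    have : n = 4 * (n / 4) := (Nat.mul_div_cancel' h4).symm
    exact_mod_cast this
  have h2T : 2 * T = (n : ℤ) * ((n : ℤ) - 1) := by
    rw [hT, Fin.sum_univ_eq_sum_range (fun i => (i : ℤ)) n]
    have hg := Finset.sum_range_id_mul_two n
    have hn1 : 1 ≤ n := hpos
    zify [hn1] at hg
    have hc : (∑ i ∈ Finset.range n, ((i : ℕ) : ℤ)) = ((∑ i ∈ Finset.range n, i : ℕ) : ℤ) := by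
      push_cast; rfl
    rw [hc]
    linarith
  obtain ⟨k, hk⟩ := hmod
  simp only [Set.mem_insert_iff, Set.mem_singleton_iff] at hd0 hd1
  have hbound : -M ≤ D p0 + D p1 ∧ D p0 + D p1 ≤ M := by
    rcases hd0 with h | h <;> rcases hd1 with h' | h' <;> rw [h, h'] <;> constructor <;> linarith
  set S : ℤ := D p0 + D p1 with hS
  have hkey : 2 * S = 4 * M * (2 * k - 4 * M + 1) := by
    have e1 : S + T = (4 * M) * k := by rw [← hnM]; exact hk
    have e2 : 2 * T = (4 * M) * (4 * M - 1) := by rw [← hnM]; exact_mod_cast h2T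
    nlinarith [e1, e2]
  set t : ℤ := 2 * k - 4 * M + 1 with ht
  have htodd : t ≠ 0 := by omega
  rcases lt_or_gt_of_ne htodd with h | h
  · have : 4 * M * t ≤ 4 * M * (-1) := by
      apply mul_le_mul_of_nonneg_left (by omega) (by linarith)
    omega
  · have : 4 * M * 1 ≤ 4 * M * t := by
      apply mul_le_mul_of_nonneg_left (by omega) (by linarith)
    omega
end
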